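/- arXiv:1012.1924 — 3 statements merged into one kernel-verified Lean document; each statement's English description precedes it below -/
import Mathlib

section
/- For s ∈ S and x ∈ W: if sx > x then C_s C_x = C_{sx} + Σ_{y < x, sy < y} μ(y,x) C_y; if sx < x then C_s C_x = (v + v⁻¹) C_x. -/
open LaurentPolynomial

/-- Membership in `v ℤ[v] ⊆ ℤ[v,v⁻¹]`. -/
def IsVPol (p : LaurentPolynomial ℤ) : Prop :=
  ∃ q : Polynomial ℤ, p = Polynomial.toLaurent q * T 1

/-- The coefficient of `v` in a Laurent polynomial. -/
def muCoeff (p : LaurentPolynomial ℤ) : ℤ := p.coeff 1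

variable {B W : Type*} [Group W] {M : CoxeterMatrix B}

/-- The Bruhat order `≤` on `W`: generated by right multiplication by reflections which
increases the length. -/
def BruhatLE (cs : CoxeterSystem M W) : W → W → Prop :=
  Relation.ReflTransGen
    (fun a b => (∃ t, cs.IsReflection t ∧ b = a * t) ∧ cs.length a < cs.length b)

/-- The strict Bruhat order on `W`. -/
def BruhatLT (cs : CoxeterSystem M W) (x y : W) : Prop :=
  BruhatLE cs x y ∧ x ≠ y

/-- The Hecke algebra of a Coxeter system, axiomatized: a `ℤ[v,v⁻¹]`-algebra with a basis
`T_x` indexed by `W` satisfying the braid and quadratic relations. -/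
structure HeckeAlg (cs : CoxeterSystem M W) (A : Type*) [Ring A]
    [Algebra (LaurentPolynomial ℤ) A] where
  Tb : Module.Basis W (LaurentPolynomial ℤ) A
  Tb_one : Tb 1 = 1
  Tb_mul : ∀ x y : W, cs.length (x * y) = cs.length x + cs.length y →
    Tb x * Tb y = Tb (x * y)
  Tb_quadratic : ∀ i : B, (Tb (cs.simple i) + 1) *
    (Tb (cs.simple i) - algebraMap (LaurentPolynomial ℤ) A (T (-2))) = 0

namespace HeckeAlg

variable {cs : CoxeterSystem M W} {A : Type*} [Ring A] [Algebra (LaurentPolynomial ℤ) A]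

/-- The standard basis element `H_x = v^{ℓ(x)} T_x`. -/
noncomputable def H (ha : HeckeAlg cs A) (x : W) : A :=
  algebraMap (LaurentPolynomial ℤ) A (T (cs.length x : ℤ)) * ha.Tb x

/-- The element `C_s = H_s + v` for a simple reflection `s`. -/
noncomputable def Cs (ha : HeckeAlg cs A) (i : B) : A :=
  ha.H (cs.simple i) + algebraMap (LaurentPolynomial ℤ) A (T 1)

/-- Data of the bar involution `d` on the Hecke algebra: a ring endomorphism with
`d(v) = v⁻¹` and `d(H_x) = (H_{x⁻¹})⁻¹`. -/
structure Bar (ha : HeckeAlg cs A) where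
  d : A →+* A
  d_scalar : ∀ n : ℤ, d (algebraMap (LaurentPolynomial ℤ) A (T n)) =
    algebraMap (LaurentPolynomial ℤ) A (T (-n))
  d_H_mul : ∀ x : W, d (ha.H x) * ha.H x⁻¹ = 1
  d_H_mul' : ∀ x : W, ha.H x⁻¹ * d (ha.H x) = 1

/-- `c` is a Kazhdan–Lusztig basis element at `x`: bar-invariant and congruent to `H_x`
modulo `∑_y v ℤ[v] H_y`. -/
def IsKL (ha : HeckeAlg cs A) (bar : ha.Bar) (x : W) (c : A) : Prop :=
  bar.d c = c ∧ ∃ f : W →₀ LaurentPolynomial ℤ, (∀ y, IsVPol (f y)) ∧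
    c = ha.H x + f.sum fun y r => r • ha.H y

end HeckeAlg

open scoped Classical
open HeckeAlg

namespace KLAux


/-- nonnegative support -/
def VP0 (p : LaurentPolynomial ℤ) : Prop := ∀ n : ℤ, n < 0 → p.coeff n = 0

/-- positive support -/
def VP (p : LaurentPolynomial ℤ) : Prop := ∀ n : ℤ, n ≤ 0 → p.coeff n = 0

lemma VP.vp0 {p} (hp : VP p) : VP0 p := fun n hn => hp n hn.le

lemma vp_zero : VP 0 := fun _ _ => rfl

lemma vp_add {p q} (hp : VP p) (hq : VP q) : VP (p + q) := fun n hn => by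
  rw [AddMonoidAlgebra.coeff_add, Finsupp.add_apply, hp n hn, hq n hn, add_zero]

lemma vp_neg {p} (hp : VP p) : VP (-p) := fun n hn => by
  rw [AddMonoidAlgebra.coeff_neg, Finsupp.neg_apply, hp n hn, neg_zero]

lemma vp_sub {p q} (hp : VP p) (hq : VP q) : VP (p - q) := by
  rw [sub_eq_add_neg]; exact vp_add hp (vp_neg hq)

lemma vp_zsmul {p} (c : ℤ) (hp : VP p) : VP (c • p) := fun n hn => by
  rw [AddMonoidAlgebra.coeff_smul_apply, hp n hn, smul_zero]

lemma vp_sum {α : Type*} {s : Finset α} {f : α → LaurentPolynomial ℤ}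
    (hf : ∀ a ∈ s, VP (f a)) : VP (∑ a ∈ s, f a) := fun n hn => by
  rw [AddMonoidAlgebra.coeff_sum, Finsupp.finset_sum_apply]
  exact Finset.sum_eq_zero fun a ha => hf a ha n hn

lemma vp0_one : VP0 (1 : LaurentPolynomial ℤ) := fun n hn => by
  have : (1 : LaurentPolynomial ℤ) = AddMonoidAlgebra.single 0 1 := rfl
  rw [this, AddMonoidAlgebra.coeff_single, Finsupp.single_apply]
  simp only [ite_eq_right_iff]
  intro h; omega

lemma T_eq_single (n : ℤ) : (T n : LaurentPolynomial ℤ) = AddMonoidAlgebra.single n 1 := rfl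

lemma isVPol_vp {p} (hp : IsVPol p) : VP p := by
  obtain ⟨q, rfl⟩ := hp
  intro n hn
  rw [T_eq_single, AddMonoidAlgebra.coeff_mul_single_apply, LaurentPolynomial.coeff_toLaurent]
  rw [Finsupp.mapDomain_notin_range, zero_mul]
  rintro ⟨m, hm⟩
  simp only [Nat.castEmbedding_apply] at hm
  omega

lemma vp_T1_mul {p} (hp : VP0 p) : VP (T 1 * p) := fun n hn => by
  rw [T_eq_single, AddMonoidAlgebra.coeff_single_mul_apply, hp, mul_zero]
  omega

lemma vp_Tneg1_mul_sub {p} (hp : VP p) :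
    VP (T (-1) * p - muCoeff p • (1 : LaurentPolynomial ℤ)) := fun n hn => by
  rw [AddMonoidAlgebra.coeff_sub, Finsupp.sub_apply, T_eq_single, AddMonoidAlgebra.coeff_single_mul_apply, one_mul]
  have h1 : (1 : LaurentPolynomial ℤ) = AddMonoidAlgebra.single (0:ℤ) (1:ℤ) := rfl
  rw [AddMonoidAlgebra.coeff_smul_apply, h1, AddMonoidAlgebra.coeff_single, Finsupp.single_apply]
  rcases lt_or_eq_of_le hn with hn' | rfl
  · rw [hp _ (by omega)]
    simp only [smul_eq_mul, ite_eq_right_iff, mul_one] at *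
    rw [if_neg (by omega)]
    ring
  · norm_num [muCoeff]

lemma vp_invert_eq_zero {p} (hp : VP p) (h : invert p = p) : p = 0 := by
  ext n
  rcases le_or_gt n 0 with hn | hn
  · rw [hp n hn]; rfl
  · have h2 := invert_apply p n
    rw [h] at h2
    rw [h2, hp (-n) (by omega)]; rfl

lemma invert_one_eq {p} (hp : VP p) (h : invert (1 + p) = 1 + p) : p = 0 := by
  apply vp_invert_eq_zero hp
  have := map_add invert (1:LaurentPolynomial ℤ) p
  rw [map_one] at this
  rw [this] at h
  exact add_left_cancel h



open CoxeterSystem List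

variable {B W : Type*} [Group W] {M : CoxeterMatrix B} (cs : CoxeterSystem M W)

local prefix:100 "ℓ" => cs.length
local prefix:100 "π" => cs.wordProd
local prefix:100 "σ" => cs.simple

/-- sign-cocycle action of the generators on `W × ℤˣ` -/
noncomputable def sgnF (i : B) : Function.End (W × ℤˣ) :=
  fun p => (σ i * p.1 * σ i, if p.1 = σ i then -p.2 else p.2)

lemma ite_neg (c : Prop) [Decidable c] (u : ℤˣ) :
    (if c then -u else u) = (if c then -1 else 1) * u := by split <;> simp

lemma simple_mul_q (i j : B) : σ j * (σ i * σ j) = (σ i * σ j)⁻¹ * σ j := by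
  rw [mul_inv_rev, cs.inv_simple, cs.inv_simple]
  group

lemma q_pow_conj (i j : B) (n : ℕ) :
    (σ i * σ j)⁻¹ * (((σ i * σ j) ^ n)⁻¹ * σ j) * (σ i * σ j)
      = ((σ i * σ j) ^ (n + 2))⁻¹ * σ j := by
  have h1 : σ j * (σ i * σ j) = (σ i * σ j)⁻¹ * σ j := simple_mul_q cs i j
  calc (σ i * σ j)⁻¹ * (((σ i * σ j) ^ n)⁻¹ * σ j) * (σ i * σ j)
      = (σ i * σ j)⁻¹ * ((σ i * σ j) ^ n)⁻¹ * (σ j * (σ i * σ j)) := by group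
    _ = (σ i * σ j)⁻¹ * ((σ i * σ j) ^ n)⁻¹ * ((σ i * σ j)⁻¹ * σ j) := by rw [h1]
    _ = ((σ i * σ j) ^ (n + 2))⁻¹ * σ j := by
        rw [show n + 2 = 1 + n + 1 by omega, pow_add, pow_add, pow_one]
        simp [mul_inv_rev, mul_assoc]

lemma sgnF_mul_pow (i j : B) (m : ℕ) (p : W × ℤˣ) :
    ((sgnF cs i * sgnF cs j) ^ m) p =
      ((σ i * σ j) ^ m * p.1 * ((σ i * σ j) ^ m)⁻¹,
        (∏ n ∈ Finset.range (2 * m),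
          if p.1 = ((σ i * σ j) ^ n)⁻¹ * σ j then (-1 : ℤˣ) else 1) * p.2) := by
  induction m generalizing p with
  | zero => simp [Function.End.one_def]
  | succ m ih =>
    rw [pow_succ]
    show ((sgnF cs i * sgnF cs j) ^ m) ((sgnF cs i) ((sgnF cs j) p)) = _
    have e1 : (σ j * p.1 * σ j = σ i) ↔ (p.1 = ((σ i * σ j) ^ 1)⁻¹ * σ j) := by
      rw [pow_one, ← simple_mul_q cs i j]
      constructor
      · intro hyp
        have h2 := congrArg (fun w => σ j * w * σ j) hyp
        simp only [← mul_assoc] at h2 ⊢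
        rw [← h2]
        simp [mul_assoc, cs.simple_mul_simple_cancel_left, cs.simple_mul_simple_cancel_right]
      · intro hyp
        rw [hyp]
        simp only [← mul_assoc]
        simp [mul_assoc, cs.simple_mul_simple_cancel_left, cs.simple_mul_simple_cancel_right]
    have e2 : (p.1 = σ j) ↔ (p.1 = ((σ i * σ j) ^ 0)⁻¹ * σ j) := by
      rw [pow_zero, inv_one, one_mul]
    have hA : (sgnF cs i) ((sgnF cs j) p) =
        ((σ i * σ j) * p.1 * (σ i * σ j)⁻¹,
          (if p.1 = ((σ i * σ j) ^ 1)⁻¹ * σ j then (-1:ℤˣ) else 1) *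
          ((if p.1 = ((σ i * σ j) ^ 0)⁻¹ * σ j then (-1:ℤˣ) else 1) * p.2)) := by
      show (σ i * (σ j * p.1 * σ j) * σ i,
          if (σ j * p.1 * σ j) = σ i then -(if p.1 = σ j then -p.2 else p.2)
            else (if p.1 = σ j then -p.2 else p.2)) = _
      rw [ite_neg _ p.2, ite_neg, if_congr e1 rfl rfl, if_congr e2 rfl rfl,
        mul_inv_rev, cs.inv_simple, cs.inv_simple]
      apply Prod.ext
      · show σ i * (σ j * p.1 * σ j) * σ i = σ i * σ j * p.1 * (σ j * σ i)
        group
      · rfl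
    rw [hA, ih]
    have hcond : ∀ n : ℕ,
        ((σ i * σ j) * p.1 * (σ i * σ j)⁻¹ = ((σ i * σ j) ^ n)⁻¹ * σ j)
          ↔ (p.1 = ((σ i * σ j) ^ (n + 2))⁻¹ * σ j) := by
      intro n
      rw [← q_pow_conj cs i j n]
      constructor
      · intro hyp
        have h2 := congrArg (fun w => (σ i * σ j)⁻¹ * w * (σ i * σ j)) hyp
        rw [← h2]
        group
      · intro hyp
        rw [hyp]
        group
    apply Prod.ext
    · show (σ i * σ j) ^ m * ((σ i * σ j) * p.1 * (σ i * σ j)⁻¹) * ((σ i * σ j) ^ m)⁻¹ = _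
      simp only [mul_assoc]
      rw [← mul_inv_rev, ← pow_succ]
      rw [show (σ i * σ j) ^ m * (σ i * (σ j * (p.1 * ((σ i * σ j) ^ (m+1))⁻¹)))
          = ((σ i * σ j) ^ m * (σ i * σ j)) * (p.1 * ((σ i * σ j) ^ (m+1))⁻¹) by
        simp only [mul_assoc], ← pow_succ]
    · show (∏ n ∈ Finset.range (2 * m),
          if (σ i * σ j) * p.1 * (σ i * σ j)⁻¹ = ((σ i * σ j) ^ n)⁻¹ * σ j
          then (-1 : ℤˣ) else 1) * _ = _
      have hre : (∏ n ∈ Finset.range (2 * m),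
          if (σ i * σ j) * p.1 * (σ i * σ j)⁻¹ = ((σ i * σ j) ^ n)⁻¹ * σ j
          then (-1 : ℤˣ) else 1) =
          ∏ n ∈ Finset.range (2 * m),
          if p.1 = ((σ i * σ j) ^ (n + 2))⁻¹ * σ j then (-1 : ℤˣ) else 1 :=
        Finset.prod_congr rfl fun n _ => if_congr (hcond n) rfl rfl
      rw [hre, show 2 * (m + 1) = (2 * m + 1) + 1 by omega,
        Finset.prod_range_succ', Finset.prod_range_succ']
      have : ∀ k : ℕ, k + 1 + 1 = k + 2 := fun k => rfl
      simp only [this]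
      group

lemma sgnF_liftable : M.IsLiftable (sgnF cs) := by
  intro i j
  funext p
  rw [sgnF_mul_pow cs i j (M i j) p]
  rcases Nat.eq_zero_or_pos (M i j) with h0 | hpos
  · simp [h0, Function.End.one_def]
  · have hq : (σ i * σ j) ^ (M i j) = 1 := cs.simple_mul_simple_pow i j
    have hper : ∀ n : ℕ, ((σ i * σ j) ^ (M i j + n))⁻¹ = ((σ i * σ j) ^ n)⁻¹ := by
      intro n
      rw [pow_add, hq, one_mul]
    have hprod : (∏ n ∈ Finset.range (2 * M i j),
        if p.1 = ((σ i * σ j) ^ n)⁻¹ * σ j then (-1 : ℤˣ) else 1) = 1 := by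
      rw [show 2 * M i j = M i j + M i j by omega, Finset.prod_range_add]
      have : ∀ n ∈ Finset.range (M i j),
          (if p.1 = ((σ i * σ j) ^ (M i j + n))⁻¹ * σ j then (-1 : ℤˣ) else 1)
          = (if p.1 = ((σ i * σ j) ^ n)⁻¹ * σ j then (-1 : ℤˣ) else 1) := by
        intro n _
        rw [hper n]
      rw [Finset.prod_congr rfl this, ← sq]
      exact Int.units_sq _
    rw [hq, hprod]
    simp [Function.End.one_def]

/-- The sign cocycle as a homomorphism `W →* Function.End (W × ℤˣ)`. -/
noncomputable def sgnHom : W →* Function.End (W × ℤˣ) :=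
  cs.lift ⟨sgnF cs, sgnF_liftable cs⟩

lemma sgnHom_simple (i : B) : sgnHom cs (σ i) = sgnF cs i :=
  cs.lift_apply_simple _ i

/-- the sign of `t` along a list of reflections -/
noncomputable def esgn (L : List W) (t : W) : ℤˣ :=
  (L.map (fun u => if u = t then (-1 : ℤˣ) else 1)).prod

lemma esgn_nil (t : W) : esgn ([] : List W) t = 1 := rfl

lemma esgn_cons (u : W) (L : List W) (t : W) :
    esgn (u :: L) t = (if u = t then (-1:ℤˣ) else 1) * esgn L t := by
  simp [esgn]

lemma esgn_eq_one_of_not_mem {L : List W} {t : W} (ht : t ∉ L) : esgn L t = 1 := by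
  induction L with
  | nil => rfl
  | cons u L ih =>
    rw [esgn_cons, if_neg (by rintro rfl; exact ht List.mem_cons_self),
      ih (fun hm => ht (List.mem_cons_of_mem _ hm)), one_mul]

lemma sgnHom_word (ω : List B) (p : W × ℤˣ) :
    sgnHom cs (π ω) p = (π ω * p.1 * (π ω)⁻¹, esgn (cs.rightInvSeq ω) p.1 * p.2) := by
  induction ω generalizing p with
  | nil => simp [Function.End.one_def, esgn_nil]
  | cons i ω ih =>
    rw [cs.wordProd_cons, map_mul, sgnHom_simple]
    show sgnF cs i (sgnHom cs (π ω) p) = _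
    rw [ih p]
    show (σ i * (π ω * p.1 * (π ω)⁻¹) * σ i,
        if (π ω * p.1 * (π ω)⁻¹) = σ i then -(esgn (cs.rightInvSeq ω) p.1 * p.2)
          else esgn (cs.rightInvSeq ω) p.1 * p.2) = _
    have hris : cs.rightInvSeq (i :: ω) = (π ω)⁻¹ * σ i * π ω :: cs.rightInvSeq ω := rfl
    rw [hris, esgn_cons, ite_neg]
    apply Prod.ext
    · show σ i * (π ω * p.1 * (π ω)⁻¹) * σ i = (σ i * π ω) * p.1 * (σ i * π ω)⁻¹
      rw [mul_inv_rev, cs.inv_simple]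
      group
    · show (if (π ω * p.1 * (π ω)⁻¹) = σ i then (-1:ℤˣ) else 1) * (esgn (cs.rightInvSeq ω) p.1 * p.2)
        = ((if ((π ω)⁻¹ * σ i * π ω) = p.1 then (-1:ℤˣ) else 1) * esgn (cs.rightInvSeq ω) p.1) * p.2
      rw [← mul_assoc]
      congr 2
      apply if_congr _ rfl rfl
      constructor
      · intro hyp
        rw [← hyp]
        group
      · intro hyp
        rw [← hyp]
        group

/-- the sign `η(w, t)` -/
noncomputable def eta (w t : W) : ℤˣ := (sgnHom cs w (t, 1)).2

lemma sgnHom_apply (w t : W) (ε : ℤˣ) :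
    sgnHom cs w (t, ε) = (w * t * w⁻¹, eta cs w t * ε) := by
  obtain ⟨ω, -, rfl⟩ := cs.exists_reduced_word w
  have h1 := sgnHom_word cs ω (t, ε)
  have h2 := sgnHom_word cs ω (t, 1)
  rw [h1]
  simp [eta, h2]

lemma eta_eq_esgn (ω : List B) (t : W) : eta cs (π ω) t = esgn (cs.rightInvSeq ω) t := by
  have := sgnHom_word cs ω (t, 1)
  rw [eta, this, mul_one]

lemma eta_simple_conj (t : W) (ht : cs.IsReflection t) : eta cs t t = -1 := by
  obtain ⟨u, i, rfl⟩ := ht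
  have h1 : sgnHom cs u⁻¹ (u * σ i * u⁻¹, 1)
      = (σ i, eta cs u⁻¹ (u * σ i * u⁻¹)) := by
    rw [sgnHom_apply, mul_one]
    congr 1
    group
  have h2 : eta cs u (σ i) * eta cs u⁻¹ (u * σ i * u⁻¹) = 1 := by
    have h3 : sgnHom cs (u * u⁻¹) (u * σ i * u⁻¹, 1) = (u * σ i * u⁻¹, 1) := by
      rw [mul_inv_cancel, map_one]
      rfl
    rw [map_mul] at h3
    have h4 : (sgnHom cs u * sgnHom cs u⁻¹) (u * σ i * u⁻¹, 1)
        = sgnHom cs u (sgnHom cs u⁻¹ (u * σ i * u⁻¹, 1)) := rfl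
    rw [h4, h1, sgnHom_apply] at h3
    have := congrArg Prod.snd h3
    simpa [mul_one] using this
  have h5 : sgnHom cs (u * σ i * u⁻¹) (u * σ i * u⁻¹, 1)
      = (u * σ i * u⁻¹, -1) := by
    have hw : u * σ i * u⁻¹ = u * (σ i * u⁻¹) := by group
    rw [hw, map_mul, map_mul]
    have h6 : (sgnHom cs u * (sgnHom cs (σ i) * sgnHom cs u⁻¹)) (u * (σ i * u⁻¹), 1)
        = sgnHom cs u (sgnHom cs (σ i) (sgnHom cs u⁻¹ (u * (σ i * u⁻¹), 1))) := rfl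
    rw [h6, ← hw, h1, sgnHom_simple]
    show sgnHom cs u (sgnF cs i (σ i, eta cs u⁻¹ (u * σ i * u⁻¹))) = _
    have h7 : sgnF cs i (σ i, eta cs u⁻¹ (u * σ i * u⁻¹))
        = (σ i, -(eta cs u⁻¹ (u * σ i * u⁻¹))) := by
      show (σ i * σ i * σ i, if σ i = σ i then _ else _) = _
      rw [if_pos rfl, cs.simple_mul_simple_cancel_right]
    rw [h7, sgnHom_apply]
    apply Prod.ext
    · rfl
    · show eta cs u (σ i) * -(eta cs u⁻¹ (u * σ i * u⁻¹)) = -1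
      rw [mul_neg, h2]
  rw [eta, h5]

lemma eta_mul_reflection (w t : W) (ht : cs.IsReflection t) :
    eta cs (w * t) t = - eta cs w t := by
  have h2 : sgnHom cs t (t, 1) = (t, -1) := by
    rw [sgnHom_apply, eta_simple_conj cs t ht, mul_one]
    congr 1
    rw [ht.mul_self, one_mul, ht.inv]
  have h1 : sgnHom cs (w * t) (t, 1) = sgnHom cs w (t, -1) := by
    rw [map_mul]
    show sgnHom cs w (sgnHom cs t (t, 1)) = _
    rw [h2]
  have h3 := sgnHom_apply cs w t (-1)
  rw [eta, h1, h3, mul_neg_one]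

lemma eta_eq_one_of_length_lt (w t : W) (ht : cs.IsReflection t)
    (hl : ℓ w < ℓ (w * t)) : eta cs w t = 1 := by
  obtain ⟨ω, hred, rfl⟩ := cs.exists_reduced_word' w
  rw [eta_eq_esgn]
  apply esgn_eq_one_of_not_mem
  intro hmem
  have := (cs.isRightInversion_of_mem_rightInvSeq hred hmem).2
  omega

lemma eta_eq_neg_one (w t : W) (ht : cs.IsReflection t)
    (hl : ℓ (w * t) < ℓ w) : eta cs w t = -1 := by
  have hw : (w * t) * t = w := by rw [mul_assoc, ht.mul_self, mul_one]
  have h1 : eta cs (w * t) t = 1 := by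
    apply eta_eq_one_of_length_lt cs _ t ht
    rw [hw]
    exact hl
  have := eta_mul_reflection cs (w * t) t ht
  rw [hw, h1] at this
  exact this

/-- Strong exchange property. -/
lemma strong_exchange {w t : W} (ht : cs.IsReflection t) (hl : ℓ (w * t) < ℓ w)
    (ω : List B) (hω : π ω = w) :
    ∃ j, j < ω.length ∧ w * t = π (ω.eraseIdx j) := by
  have heta : eta cs w t = -1 := eta_eq_neg_one cs w t ht hl
  have hmem : t ∈ cs.rightInvSeq ω := by
    by_contra hmem
    have h1 : esgn (cs.rightInvSeq ω) t = 1 := esgn_eq_one_of_not_mem hmem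
    rw [← hω, eta_eq_esgn, h1] at heta
    exact absurd heta (by decide)
  obtain ⟨j, hj, hjt⟩ := List.mem_iff_getElem.mp hmem
  rw [cs.length_rightInvSeq] at hj
  refine ⟨j, hj, ?_⟩
  have := cs.wordProd_mul_getD_rightInvSeq ω j
  rw [List.getD_eq_getElem _ 1 (by rw [cs.length_rightInvSeq]; exact hj), hjt, hω] at this
  exact this

section Bruhat

variable {B W : Type*} [Group W] {M : CoxeterMatrix B} {cs : CoxeterSystem M W}


lemma ble_refl (x : W) : BruhatLE cs x x := Relation.ReflTransGen.refl

lemma ble_trans {x y z : W} (h1 : BruhatLE cs x y) (h2 : BruhatLE cs y z) :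
    BruhatLE cs x z := Relation.ReflTransGen.trans h1 h2

lemma ble_step {x t : W} (ht : cs.IsReflection t)
    (hl : cs.length x < cs.length (x * t)) : BruhatLE cs x (x * t) :=
  Relation.ReflTransGen.single ⟨⟨t, ht, rfl⟩, hl⟩

lemma ble_left_step {x : W} {i : B}
    (hl : cs.length x < cs.length (cs.simple i * x)) :
    BruhatLE cs x (cs.simple i * x) := by
  have hrw : cs.simple i * x = x * (x⁻¹ * cs.simple i * x) := by group
  rw [hrw] at hl ⊢
  exact ble_step (by simpa using (cs.isReflection_simple i).conj x⁻¹) hl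

lemma ble_length {x y : W} (h : BruhatLE cs x y) : cs.length x ≤ cs.length y := by
  induction h with
  | refl => exact le_refl _
  | tail _ hbc ih => exact ih.trans (le_of_lt hbc.2)

lemma blt_length {x y : W} (h : BruhatLT cs x y) : cs.length x < cs.length y := by
  obtain ⟨hle, hne⟩ := h
  rcases (Relation.ReflTransGen.cases_head hle) with rfl | ⟨c, hstep, hle'⟩
  · exact absurd rfl hne
  · exact lt_of_lt_of_le hstep.2 (ble_length hle')

lemma blt_of_le_of_length {x y : W} (h : BruhatLE cs x y)
    (hl : cs.length x < cs.length y) : BruhatLT cs x y :=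
  ⟨h, fun he => by rw [he] at hl; omega⟩

/-- The main mutual induction: subword property (one direction) and the lifting property. -/
lemma bruhat_main (cs : CoxeterSystem M W) : ∀ n : ℕ,
    (∀ ω : List B, cs.IsReduced ω → ω.length ≤ n →
      ∀ δ : List B, δ.Sublist ω → BruhatLE cs (cs.wordProd δ) (cs.wordProd ω)) ∧
    (∀ u w : W, BruhatLE cs u w → cs.length w ≤ n → ∀ i : B,
      BruhatLE cs (cs.simple i * u) w ∨
        BruhatLE cs (cs.simple i * u) (cs.simple i * w)) := by
  intro n
  induction n using Nat.strong_induction_on with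
  | _ n ih =>
  constructor
  · -- subword property
    intro ω hred hlen δ hδ
    cases hδ with
    | slnil => exact ble_refl _
    | @cons δ γ i hsub =>
      -- ω = i :: γ, δ <+ γ
      have hγred : cs.IsReduced γ := by
        have := CoxeterSystem.IsReduced.drop (ω := i :: γ) hred (j := 1)
        simpa using this
      have hγlen : γ.length < n := by
        simp only [List.length_cons] at hlen
        omega
      have h1 : BruhatLE cs (cs.wordProd δ) (cs.wordProd γ) :=
        (ih γ.length hγlen).1 γ hγred le_rfl δ hsub
      have h2 : BruhatLE cs (cs.wordProd γ) (cs.wordProd (i :: γ)) := by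
        rw [cs.wordProd_cons]
        apply ble_left_step
        rw [← cs.wordProd_cons]
        rw [hred, hγred]
        simp
      exact ble_trans h1 h2
    | @cons_cons δ' γ i hsub =>
      -- ω = i :: γ, δ = i :: δ'
      have hγred : cs.IsReduced γ := by
        have := CoxeterSystem.IsReduced.drop (ω := i :: γ) hred (j := 1)
        simpa using this
      have hγlen : γ.length < n := by
        simp only [List.length_cons] at hlen
        omega
      have h1 : BruhatLE cs (cs.wordProd δ') (cs.wordProd γ) :=
        (ih γ.length hγlen).1 γ hγred le_rfl δ' hsub
      have hQ := (ih γ.length hγlen).2 (cs.wordProd δ') (cs.wordProd γ) h1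
        (by rw [hγred]) i
      rw [cs.wordProd_cons, cs.wordProd_cons]
      rcases hQ with hq | hq
      · apply ble_trans hq
        apply ble_left_step
        rw [← cs.wordProd_cons, hred, hγred]
        simp
      · exact hq
  · -- lifting/Humphreys 5.9
    intro u w hle
    induction hle with
    | refl =>
      intro _ i
      right
      exact ble_refl _
    | @tail b c hub hbc ihc =>
      intro hlen i
      have hlb : cs.length b ≤ n := le_of_lt (lt_of_lt_of_le hbc.2 hlen)
      obtain ⟨⟨t, ht, rfl⟩, hblt⟩ := hbc
      -- single step lemma: s b ≤ b*t or s b ≤ s(b*t)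
      have SS : BruhatLE cs (cs.simple i * b) (b * t) ∨
          BruhatLE cs (cs.simple i * b) (cs.simple i * (b * t)) := by
        rcases cs.length_simple_mul b i with hsb | hsb
        · -- ℓ(s b) = ℓ b + 1
          rcases cs.length_simple_mul (b * t) i with hsc | hsc
          · -- ℓ(s c) = ℓ c + 1 : step
            right
            have : cs.simple i * (b * t) = (cs.simple i * b) * t := by group
            rw [this]
            exact ble_step ht (by rw [← this]; omega)
          · -- ℓ(s c) < ℓ c : strong exchange
            obtain ⟨γ, hγred0, hγ⟩ := cs.exists_reduced_word (cs.simple i * (b * t))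
            have hγlen2 : γ.length = cs.length (cs.simple i * (b * t)) := by
              rw [hγ]; exact hγred0.symm
            have hπ : cs.wordProd (i :: γ) = b * t := by
              rw [cs.wordProd_cons, ← hγ, cs.simple_mul_simple_cancel_left]
            have hredc : cs.IsReduced (i :: γ) := by
              unfold CoxeterSystem.IsReduced
              rw [hπ, List.length_cons, hγlen2]
              omega
            have hbt : cs.length ((b * t) * t) < cs.length (b * t) := by
              rw [mul_assoc, ht.mul_self, mul_one]
              exact hblt
            obtain ⟨j, hj, hje⟩ := strong_exchange cs ht hbt (i :: γ) hπ
            rw [mul_assoc, ht.mul_self, mul_one] at hje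
            match j, hj with
            | 0, _ =>
              left
              rw [List.eraseIdx_cons_zero] at hje
              have heq : cs.simple i * b = b * t := by
                conv_lhs => rw [hje, ← hγ, cs.simple_mul_simple_cancel_left]
              rw [heq]
              exact ble_refl _
            | (k+1), hj =>
              right
              rw [List.eraseIdx_cons_succ] at hje
              rw [cs.wordProd_cons] at hje
              have hsbe : cs.simple i * b = cs.wordProd (γ.eraseIdx k) := by
                rw [hje, cs.simple_mul_simple_cancel_left]
              have hγred : cs.IsReduced γ := by
                have := CoxeterSystem.IsReduced.drop (ω := i :: γ) hredc (j := 1)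
                simpa using this
              have hγn : γ.length < n := by
                rw [hγlen2]
                omega
              rw [hγ, hsbe]
              exact (ih γ.length hγn).1 γ hγred le_rfl _ (List.eraseIdx_sublist γ k)
        · -- ℓ(s b) + 1 = ℓ b : s b ≤ b ≤ b t
          left
          have hb : b = cs.simple i * (cs.simple i * b) := by
            rw [cs.simple_mul_simple_cancel_left]
          have h1 : BruhatLE cs (cs.simple i * b) b := by
            nth_rewrite 2 [hb]
            apply ble_left_step
            rw [← hb]
            omega
          exact ble_trans h1 (ble_step ht hblt)
      rcases ihc hlb i with hq | hq
      · left
        exact ble_trans hq (ble_step ht hblt)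
      · rcases SS with hss | hss
        · left
          exact ble_trans hq hss
        · right
          exact ble_trans hq hss

end Bruhat


section Hecke

open LaurentPolynomial

variable {B W : Type*} [Group W] {M : CoxeterMatrix B} {cs : CoxeterSystem M W}
variable {A : Type*} [Ring A] [Algebra (LaurentPolynomial ℤ) A]

local notation "R" => LaurentPolynomial ℤ
local notation "φ" => algebraMap (LaurentPolynomial ℤ) A

/-- `T n` as a unit of `ℤ[v,v⁻¹]`. -/
noncomputable def Tunit (n : ℤ) : (LaurentPolynomial ℤ)ˣ :=
  ⟨T n, T (-n), by rw [← T_add, add_neg_cancel, T_zero], by rw [← T_add, neg_add_cancel, T_zero]⟩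

/-- The standard basis `H` as a `Basis`. -/
noncomputable def HB (ha : HeckeAlg cs A) : Module.Basis W (LaurentPolynomial ℤ) A :=
  ha.Tb.unitsSMul (fun x => Tunit (cs.length x))

lemma HB_apply (ha : HeckeAlg cs A) (x : W) : HB ha x = ha.H x := by
  rw [HB, Module.Basis.unitsSMul_apply, Units.smul_def]
  show (T (cs.length x : ℤ) : R) • ha.Tb x = _
  rw [HeckeAlg.H, Algebra.smul_def]

lemma H_one (ha : HeckeAlg cs A) : ha.H 1 = 1 := by
  rw [HeckeAlg.H, ha.Tb_one, cs.length_one]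
  norm_num

lemma H_mul (ha : HeckeAlg cs A) {x y : W}
    (hxy : cs.length (x * y) = cs.length x + cs.length y) :
    ha.H x * ha.H y = ha.H (x * y) := by
  have hc : ∀ (r : R) (a : A), a * φ r = φ r * a := fun r a => (Algebra.commutes r a).symm
  rw [HeckeAlg.H, HeckeAlg.H, HeckeAlg.H]
  calc φ (T (cs.length x : ℤ)) * ha.Tb x * (φ (T (cs.length y : ℤ)) * ha.Tb y)
      = φ (T (cs.length x : ℤ)) * (ha.Tb x * φ (T (cs.length y : ℤ))) * ha.Tb y := by
        simp only [mul_assoc]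
    _ = φ (T (cs.length x : ℤ)) * (φ (T (cs.length y : ℤ)) * ha.Tb x) * ha.Tb y := by
        rw [hc]
    _ = φ (T (cs.length x : ℤ)) * φ (T (cs.length y : ℤ)) * (ha.Tb x * ha.Tb y) := by
        simp only [mul_assoc]
    _ = φ (T ((cs.length (x * y) : ℤ))) * ha.Tb (x * y) := by
        rw [← map_mul, ← T_add, ha.Tb_mul x y hxy]
        congr 2
        push_cast [hxy]
        ring

lemma H_simple (ha : HeckeAlg cs A) (i : B) :
    ha.H (cs.simple i) = φ (T 1) * ha.Tb (cs.simple i) := by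
  rw [HeckeAlg.H, cs.length_simple]
  norm_num

lemma Tb_s_sq (ha : HeckeAlg cs A) (i : B) :
    ha.Tb (cs.simple i) * ha.Tb (cs.simple i)
      = ha.Tb (cs.simple i) * φ (T (-2)) - ha.Tb (cs.simple i) + φ (T (-2)) := by
  have hq := ha.Tb_quadratic i
  have h3 : ha.Tb (cs.simple i) * ha.Tb (cs.simple i) - ha.Tb (cs.simple i) * φ (T (-2))
      + ha.Tb (cs.simple i) - φ (T (-2)) = 0 := by
    rw [← hq]
    noncomm_ring
  have h4 : ha.Tb (cs.simple i) * ha.Tb (cs.simple i) =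
      (ha.Tb (cs.simple i) * ha.Tb (cs.simple i) - ha.Tb (cs.simple i) * φ (T (-2))
        + ha.Tb (cs.simple i) - φ (T (-2)))
      + (ha.Tb (cs.simple i) * φ (T (-2)) - ha.Tb (cs.simple i) + φ (T (-2))) := by
    abel
  rw [h4, h3, zero_add]

lemma Hs_sq (ha : HeckeAlg cs A) (i : B) :
    ha.H (cs.simple i) * ha.H (cs.simple i)
      = 1 + (φ (T (-1)) - φ (T 1)) * ha.H (cs.simple i) := by
  have hc : ∀ (r : R) (a : A), a * φ r = φ r * a := fun r a => (Algebra.commutes r a).symm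
  rw [H_simple]
  calc φ (T 1) * ha.Tb (cs.simple i) * (φ (T 1) * ha.Tb (cs.simple i))
      = φ (T 1) * (ha.Tb (cs.simple i) * φ (T 1)) * ha.Tb (cs.simple i) := by
        simp only [mul_assoc]
    _ = φ (T 1) * φ (T 1) * (ha.Tb (cs.simple i) * ha.Tb (cs.simple i)) := by
        rw [hc]; simp only [mul_assoc]
    _ = φ (T 2) * (ha.Tb (cs.simple i) * φ (T (-2)) - ha.Tb (cs.simple i) + φ (T (-2))) := by
        rw [Tb_s_sq, ← map_mul, ← T_add]
        norm_num
    _ = φ (T 2) * (ha.Tb (cs.simple i) * φ (T (-2))) - φ (T 2) * ha.Tb (cs.simple i)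
          + φ (T 2) * φ (T (-2)) := by
        rw [mul_add, mul_sub]
    _ = φ (T 2) * (φ (T (-2)) * ha.Tb (cs.simple i)) - φ (T 2) * ha.Tb (cs.simple i) + 1 := by
        rw [hc, ← map_mul, ← T_add]
        norm_num
    _ = ha.Tb (cs.simple i) - φ (T 2) * ha.Tb (cs.simple i) + 1 := by
        rw [← mul_assoc, ← map_mul, ← T_add]
        norm_num
    _ = 1 + (φ (T (-1)) - φ (T 1)) * (φ (T 1) * ha.Tb (cs.simple i)) := by
        rw [sub_mul, ← mul_assoc, ← mul_assoc, ← map_mul, ← map_mul, ← T_add, ← T_add]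
        norm_num
        abel

lemma H_simple_mul_of_gt (ha : HeckeAlg cs A) {i : B} {y : W}
    (hl : cs.length y < cs.length (cs.simple i * y)) :
    ha.H (cs.simple i) * ha.H y = ha.H (cs.simple i * y) := by
  apply H_mul
  rcases cs.length_simple_mul y i with hp | hp
  · rw [hp, cs.length_simple]; omega
  · omega

lemma H_simple_mul_of_lt (ha : HeckeAlg cs A) {i : B} {y : W}
    (hl : cs.length (cs.simple i * y) < cs.length y) :
    ha.H (cs.simple i) * ha.H y
      = ha.H (cs.simple i * y) + (φ (T (-1)) - φ (T 1)) * ha.H y := by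
  have hy : cs.simple i * (cs.simple i * y) = y := cs.simple_mul_simple_cancel_left i
  have hgt : cs.length (cs.simple i * y) < cs.length (cs.simple i * (cs.simple i * y)) := by
    rw [hy]; exact hl
  have h1 : ha.H (cs.simple i) * ha.H (cs.simple i * y) = ha.H y := by
    rw [H_simple_mul_of_gt ha hgt, hy]
  calc ha.H (cs.simple i) * ha.H y
      = ha.H (cs.simple i) * (ha.H (cs.simple i) * ha.H (cs.simple i * y)) := by rw [h1]
    _ = (ha.H (cs.simple i) * ha.H (cs.simple i)) * ha.H (cs.simple i * y) := by
        rw [mul_assoc]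
    _ = (1 + (φ (T (-1)) - φ (T 1)) * ha.H (cs.simple i)) * ha.H (cs.simple i * y) := by
        rw [Hs_sq]
    _ = ha.H (cs.simple i * y) + (φ (T (-1)) - φ (T 1))
          * (ha.H (cs.simple i) * ha.H (cs.simple i * y)) := by
        rw [add_mul, one_mul, mul_assoc]
    _ = _ := by rw [h1]

lemma Cs_mul_H (ha : HeckeAlg cs A) (i : B) (y : W) :
    ha.Cs i * ha.H y = ha.H (cs.simple i * y)
      + φ (if cs.length y < cs.length (cs.simple i * y) then T 1 else T (-1)) * ha.H y := by
  rw [HeckeAlg.Cs, add_mul]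
  rcases Ne.lt_or_gt (cs.length_simple_mul_ne y i) with hlt | hgt
  · rw [if_neg (by omega), H_simple_mul_of_lt ha hlt]
    have : φ (T (-1)) - φ (T 1) + φ (T 1) = φ (T (-1)) := by abel
    rw [add_assoc, ← add_mul, this]
  · rw [if_pos hgt, H_simple_mul_of_gt ha hgt]

lemma bruhat_lift {u w : W} (h : BruhatLE cs u w) {i : B}
    (hw : cs.length w < cs.length (cs.simple i * w)) :
    BruhatLE cs (cs.simple i * u) (cs.simple i * w) := by
  rcases (bruhat_main cs (cs.length w)).2 u w h le_rfl i with hq | hq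
  · exact ble_trans hq (ble_left_step hw)
  · exact hq

lemma blt_left_step {x : W} {i : B}
    (hl : cs.length x < cs.length (cs.simple i * x)) :
    BruhatLT cs x (cs.simple i * x) :=
  blt_of_le_of_length (ble_left_step hl) hl

lemma blt_trans_lt {z y x : W} (h1 : BruhatLT cs z y) (h2 : BruhatLT cs y x) :
    BruhatLT cs z x :=
  blt_of_le_of_length (ble_trans h1.1 h2.1) (lt_trans (blt_length h1) (blt_length h2))

lemma blt_lift {z x' : W} {i : B} (hz : BruhatLT cs z x')
    (hgt : cs.length x' < cs.length (cs.simple i * x')) :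
    BruhatLT cs (cs.simple i * z) (cs.simple i * x') := by
  apply blt_of_le_of_length (bruhat_lift hz.1 hgt)
  have h1 : cs.length z < cs.length x' := blt_length hz
  have h2 : cs.length (cs.simple i * z) ≤ cs.length z + 1 := by
    rcases cs.length_simple_mul z i with hp | hp <;> omega
  have h3 : cs.length (cs.simple i * x') = cs.length x' + 1 := by
    rcases cs.length_simple_mul x' i with hp | hp <;> omega
  omega

lemma d_phi (ha : HeckeAlg cs A) (bar : ha.Bar) (r : LaurentPolynomial ℤ) :
    bar.d (φ r) = φ (invert r) := by
  induction r using AddMonoidAlgebra.induction_linear with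
  | zero => rw [map_zero, map_zero, map_zero, map_zero]
  | add p q hp hq => rw [map_add, map_add, map_add, map_add, hp, hq]
  | single n c =>
    have hs : (AddMonoidAlgebra.single n c : LaurentPolynomial ℤ) = c • (T n : LaurentPolynomial ℤ) := by
      rw [T_eq_single, AddMonoidAlgebra.smul_single, smul_eq_mul, mul_one]
    rw [hs, map_zsmul, map_zsmul, map_zsmul, map_zsmul, bar.d_scalar n, invert_T]

lemma d_H_simple (ha : HeckeAlg cs A) (bar : ha.Bar) (i : B) :
    bar.d (ha.H (cs.simple i)) = ha.H (cs.simple i) + (φ (T 1) - φ (T (-1))) := by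
  have hc : ∀ (r : R) (a : A), a * φ r = φ r * a := fun r a => (Algebra.commutes r a).symm
  have h1 : ha.H (cs.simple i) * (ha.H (cs.simple i) + (φ (T 1) - φ (T (-1)))) = 1 := by
    rw [mul_add, Hs_sq, mul_sub, hc (T 1), hc (T (-1)), sub_mul]
    abel
  have h2 : (ha.H (cs.simple i) + (φ (T 1) - φ (T (-1)))) * ha.H (cs.simple i) = 1 := by
    rw [add_mul, Hs_sq, sub_mul, sub_mul]
    abel
  have h3 : ha.H (cs.simple i) * bar.d (ha.H (cs.simple i)) = 1 := by
    have := bar.d_H_mul' (cs.simple i)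
    rwa [cs.inv_simple] at this
  calc bar.d (ha.H (cs.simple i))
      = ((ha.H (cs.simple i) + (φ (T 1) - φ (T (-1)))) * ha.H (cs.simple i))
        * bar.d (ha.H (cs.simple i)) := by rw [h2, one_mul]
    _ = (ha.H (cs.simple i) + (φ (T 1) - φ (T (-1))))
        * (ha.H (cs.simple i) * bar.d (ha.H (cs.simple i))) := by rw [mul_assoc]
    _ = ha.H (cs.simple i) + (φ (T 1) - φ (T (-1))) := by rw [h3, mul_one]

lemma d_Cs (ha : HeckeAlg cs A) (bar : ha.Bar) (i : B) :
    bar.d (ha.Cs i) = ha.Cs i := by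
  rw [HeckeAlg.Cs, map_add, d_H_simple, bar.d_scalar 1]
  show _ = ha.H (cs.simple i) + φ (T 1)
  abel

/-- Triangularity of the bar involution with respect to the Bruhat order. -/
lemma d_H_mem (ha : HeckeAlg cs A) (bar : ha.Bar) (x : W) :
    bar.d (ha.H x) - ha.H x
      ∈ Submodule.span (LaurentPolynomial ℤ) (ha.H '' {z | BruhatLT cs z x}) := by
  have key : ∀ n : ℕ, ∀ x : W, cs.length x = n → bar.d (ha.H x) - ha.H x
      ∈ Submodule.span (LaurentPolynomial ℤ) (ha.H '' {z | BruhatLT cs z x}) := by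
    intro n
    induction n using Nat.strong_induction_on with
    | _ n ih =>
    intro x hx
    rcases Nat.eq_zero_or_pos n with rfl | hpos
    · have hx1 : x = 1 := cs.length_eq_zero_iff.mp hx
      subst hx1
      rw [H_one, map_one, sub_self]
      exact Submodule.zero_mem _
    · have hx1 : x ≠ 1 := by
        intro hh1
        subst hh1
        rw [cs.length_one] at hx
        omega
      obtain ⟨i, hi⟩ := cs.exists_leftDescent_of_ne_one hx1
      have hdesc : cs.length (cs.simple i * x) < cs.length x := hi
      set x' := cs.simple i * x with hx'
      have hxx : cs.simple i * x' = x := cs.simple_mul_simple_cancel_left i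
      have hgt : cs.length x' < cs.length (cs.simple i * x') := by
        rw [hxx]; exact hdesc
      have hmul : ha.H (cs.simple i) * ha.H x' = ha.H x := by
        rw [H_simple_mul_of_gt ha hgt, hxx]
      set m := bar.d (ha.H x') - ha.H x' with hm
      have hmem' : m ∈ Submodule.span (LaurentPolynomial ℤ) (ha.H '' {z | BruhatLT cs z x'}) :=
        ih (cs.length x') (by omega) x' rfl
      have hdx' : bar.d (ha.H x') = ha.H x' + m := by rw [hm]; abel
      have hd : bar.d (ha.H x)
          = (ha.H (cs.simple i) + (φ (T 1) - φ (T (-1)))) * (ha.H x' + m) := by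
        rw [← hmul, map_mul, d_H_simple, hdx']
      have expand : bar.d (ha.H x) - ha.H x
          = ha.H (cs.simple i) * m + ((φ (T 1) - φ (T (-1))) * ha.H x'
            + (φ (T 1) - φ (T (-1))) * m) := by
        rw [hd, add_mul, mul_add, mul_add, hmul]
        abel
      rw [expand]
      have hssubset : {z | BruhatLT cs z x'} ⊆ {z | BruhatLT cs z x} := by
        intro z hz
        exact blt_trans_lt hz (by rw [← hxx]; exact blt_left_step hgt)
      have hspan_mono : Submodule.span (LaurentPolynomial ℤ) (ha.H '' {z | BruhatLT cs z x'})
          ≤ Submodule.span (LaurentPolynomial ℤ) (ha.H '' {z | BruhatLT cs z x}) :=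
        Submodule.span_mono (Set.image_mono hssubset)
      refine Submodule.add_mem _ ?_ (Submodule.add_mem _ ?_ ?_)
      · -- H_s * m
        refine Submodule.span_induction ?_ ?_ ?_ ?_ hmem'
        · rintro _ ⟨z, hz, rfl⟩
          have hz1 : BruhatLT cs (cs.simple i * z) x := by
            rw [← hxx]
            exact blt_lift hz hgt
          have hz2 : BruhatLT cs z x := blt_trans_lt hz (by rw [← hxx]; exact blt_left_step hgt)
          rcases Ne.lt_or_gt (cs.length_simple_mul_ne z i) with hlt | hgt2
          · rw [H_simple_mul_of_lt ha hlt]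
            refine Submodule.add_mem _ ?_ ?_
            · exact Submodule.subset_span ⟨cs.simple i * z, hz1, rfl⟩
            · rw [← map_sub, ← Algebra.smul_def]
              exact Submodule.smul_mem _ _ (Submodule.subset_span ⟨z, hz2, rfl⟩)
          · rw [H_simple_mul_of_gt ha hgt2]
            exact Submodule.subset_span ⟨cs.simple i * z, hz1, rfl⟩
        · rw [mul_zero]; exact Submodule.zero_mem _
        · intro a b _ _ hma hmb
          rw [mul_add]; exact Submodule.add_mem _ hma hmb
        · intro r a _ hma
          rw [mul_smul_comm]
          exact Submodule.smul_mem _ _ hma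
      · rw [← map_sub, ← Algebra.smul_def]
        refine Submodule.smul_mem _ _ (Submodule.subset_span ⟨x', ?_, rfl⟩)
        rw [← hxx]
        exact blt_left_step hgt
      · rw [← map_sub, ← Algebra.smul_def]
        exact Submodule.smul_mem _ _ (hspan_mono hmem')
  exact key (cs.length x) x rfl

lemma sum_repr' (ha : HeckeAlg cs A) (e : A) :
    e = ∑ y ∈ ((HB ha).repr e).support, ((HB ha).repr e) y • ha.H y := by
  have h1 := (HB ha).linearCombination_repr e
  rw [Finsupp.linearCombination_apply] at h1
  conv_lhs => rw [← h1]
  rw [Finsupp.sum]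
  apply Finset.sum_congr rfl
  intro y _
  rw [HB_apply]

lemma repr_smulH (ha : HeckeAlg cs A) (r : LaurentPolynomial ℤ) (y z : W) :
    ((HB ha).repr (r • ha.H y)) z = if y = z then r else 0 := by
  rw [← HB_apply, map_smul, Finsupp.smul_apply, Module.Basis.repr_self, Finsupp.single_apply]
  split <;> simp

/-- Key coefficient formula for the bar involution. -/
lemma repr_d (ha : HeckeAlg cs A) (bar : ha.Bar) (e : A) (z : W)
    (hz : ∀ y ∈ ((HB ha).repr e).support, ¬ BruhatLT cs z y) :
    ((HB ha).repr (bar.d e)) z = invert (((HB ha).repr e) z) := by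
  set g := (HB ha).repr e with hg
  have he : bar.d e = ∑ y ∈ g.support,
      (invert (g y) • ha.H y + φ (invert (g y)) * (bar.d (ha.H y) - ha.H y)) := by
    nth_rewrite 1 [sum_repr' ha e]
    rw [map_sum]
    apply Finset.sum_congr rfl
    intro y _
    rw [Algebra.smul_def, map_mul, d_phi, mul_sub,
      Algebra.smul_def (invert (((HB ha).repr e) y)) (ha.H y)]
    abel
  rw [he, map_sum, Finsupp.finset_sum_apply]
  have hterm : ∀ y ∈ g.support,
      ((HB ha).repr (invert (g y) • ha.H y + φ (invert (g y)) * (bar.d (ha.H y) - ha.H y))) z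
        = if y = z then invert (g y) else 0 := by
    intro y hy
    rw [map_add, Finsupp.add_apply, repr_smulH]
    have hzero : ((HB ha).repr (φ (invert (g y)) * (bar.d (ha.H y) - ha.H y))) z = 0 := by
      have hmem : φ (invert (g y)) * (bar.d (ha.H y) - ha.H y)
          ∈ Submodule.span (LaurentPolynomial ℤ) (⇑(HB ha) '' {w | BruhatLT cs w y}) := by
        rw [← Algebra.smul_def]
        apply Submodule.smul_mem
        have := d_H_mem ha bar y
        have himg : ha.H '' {w | BruhatLT cs w y} = ⇑(HB ha) '' {w | BruhatLT cs w y} := by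
          apply Set.image_congr
          intro a _
          rw [HB_apply]
        rw [himg] at this
        exact this
      have hsupp := Module.Basis.repr_support_subset_of_mem_span (HB ha) _ hmem
      rw [← Finsupp.notMem_support_iff]
      intro hzin
      exact hz y hy (hsupp hzin)
    rw [hzero, add_zero]
  rw [Finset.sum_congr rfl hterm, Finset.sum_ite_eq' g.support z (fun y => invert (g y))]
  split
  · rfl
  · rw [Finsupp.notMem_support_iff.mp (by assumption), map_zero]

/-- Uniqueness: a bar-invariant element with all coefficients in `vℤ[v]` is zero. -/
lemma uniq (ha : HeckeAlg cs A) (bar : ha.Bar) (e : A) (hbar : bar.d e = e)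
    (hv : ∀ z, VP (((HB ha).repr e) z)) : e = 0 := by
  by_contra he
  have hne : ((HB ha).repr e).support.Nonempty := by
    rw [Finsupp.support_nonempty_iff]
    intro h0
    exact he (by simpa [h0] using ((HB ha).repr.map_eq_zero_iff).mp h0)
  obtain ⟨y₀, hy₀, hmax⟩ := Finset.exists_max_image ((HB ha).repr e).support
    (fun y => cs.length y) hne
  have hcond : ∀ y ∈ ((HB ha).repr e).support, ¬ BruhatLT cs y₀ y := by
    intro y hy hlt
    have h1 := blt_length hlt
    have h2 := hmax y hy
    omega
  have hrd := repr_d ha bar e y₀ hcond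
  rw [hbar] at hrd
  exact (Finsupp.mem_support_iff.mp hy₀) (vp_invert_eq_zero (hv y₀) hrd.symm)

variable (ha : HeckeAlg cs A) (bar : ha.Bar) {C : W → A}
  {h : W → W →₀ LaurentPolynomial ℤ}

lemma repr_finsupp_sum (f : W →₀ LaurentPolynomial ℤ) :
    (HB ha).repr (f.sum fun y r => r • ha.H y) = f := by
  rw [map_finsuppSum]
  have h2 : (f.sum fun a b => (HB ha).repr (b • ha.H a)) = f.sum fun a b => Finsupp.single a b := by
    apply Finsupp.sum_congr
    intro y _
    rw [← HB_apply, map_smul, Module.Basis.repr_self, Finsupp.smul_single, smul_eq_mul, mul_one]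
  rw [h2, Finsupp.sum_single]

lemma reprC (hh : ∀ x, C x = (h x).sum fun y r => r • ha.H y) (x : W) :
    (HB ha).repr (C x) = h x := by
  rw [hh x, repr_finsupp_sum]

/-- Support and normalization facts about KL elements. -/
lemma supp_lemma (hC : ∀ x, ha.IsKL bar x (C x))
    (hh : ∀ x, C x = (h x).sum fun y r => r • ha.H y) (x : W) :
    (∀ y, y ≠ x → VP (h x y)) ∧ (∀ y, ¬ BruhatLE cs y x → h x y = 0) ∧ h x x = 1 := by
  obtain ⟨hdC, f, hf, hCe⟩ := hC x
  have hx0 : ∀ y, h x y = (if y = x then 1 else 0) + f y := by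
    intro y
    have h1 : (HB ha).repr (C x) = Finsupp.single x 1 + f := by
      rw [hCe, map_add, repr_finsupp_sum, ← HB_apply, Module.Basis.repr_self]
    rw [← reprC ha hh x, h1, Finsupp.add_apply, Finsupp.single_apply]
    by_cases hyx : y = x
    · subst hyx; simp
    · rw [if_neg hyx, if_neg (Ne.symm hyx)]
  have SLv : ∀ y, y ≠ x → VP (h x y) := by
    intro y hy
    rw [hx0 y, if_neg hy, zero_add]
    exact isVPol_vp (hf y)
  have SLb : ∀ y, ¬ BruhatLE cs y x → h x y = 0 := by
    intro y hy
    by_contra hne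
    set Bad := ((h x).support.filter (fun z => ¬ BruhatLE cs z x)) with hBad
    have hBne : Bad.Nonempty :=
      ⟨y, Finset.mem_filter.mpr ⟨Finsupp.mem_support_iff.mpr hne, hy⟩⟩
    obtain ⟨y₀, hy₀, hmax⟩ := Finset.exists_max_image Bad (fun z => cs.length z) hBne
    have hy₀s := (Finset.mem_filter.mp hy₀).1
    have hy₀b := (Finset.mem_filter.mp hy₀).2
    have hcond : ∀ z ∈ ((HB ha).repr (C x)).support, ¬ BruhatLT cs y₀ z := by
      rw [reprC ha hh x]
      intro z hz hlt
      have h1 : ¬ BruhatLE cs z x := fun hzx => hy₀b (ble_trans hlt.1 hzx)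
      have h2 : z ∈ Bad := Finset.mem_filter.mpr ⟨hz, h1⟩
      have h3 := hmax z h2
      have h4 := blt_length hlt
      omega
    have hrd := repr_d ha bar (C x) y₀ hcond
    rw [hdC, reprC ha hh x] at hrd
    have hy₀x : y₀ ≠ x := fun he => hy₀b (by rw [he]; exact ble_refl x)
    exact (Finsupp.mem_support_iff.mp hy₀s) (vp_invert_eq_zero (SLv y₀ hy₀x) hrd.symm)
  refine ⟨SLv, SLb, ?_⟩
  · have hcond : ∀ z ∈ ((HB ha).repr (C x)).support, ¬ BruhatLT cs x z := by
      rw [reprC ha hh x]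
      intro z hz hlt
      have h1 : ¬ BruhatLE cs z x := by
        intro hzx
        have h2 := ble_length hzx
        have h3 := blt_length hlt
        omega
      exact (Finsupp.mem_support_iff.mp hz) (SLb z h1)
    have hrd := repr_d ha bar (C x) x hcond
    rw [hdC, reprC ha hh x] at hrd
    rw [hx0 x, if_pos rfl] at hrd ⊢
    rw [invert_one_eq (isVPol_vp (hf x)) hrd.symm, add_zero]

lemma reprCs (hh : ∀ x, C x = (h x).sum fun y r => r • ha.H y) (i : B) (x z : W) :
    ((HB ha).repr (ha.Cs i * C x)) z
      = h x (cs.simple i * z)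
        + (if cs.length z < cs.length (cs.simple i * z) then (T 1 : LaurentPolynomial ℤ)
            else T (-1)) * h x z := by
  have hCx : C x = ∑ y ∈ (h x).support, h x y • ha.H y := by
    rw [hh x]; rfl
  have hterm : ∀ y, ha.Cs i * (h x y • ha.H y)
      = h x y • ha.H (cs.simple i * y)
        + ((if cs.length y < cs.length (cs.simple i * y) then (T 1 : LaurentPolynomial ℤ)
            else T (-1)) * h x y) • ha.H y := by
    intro y
    rw [mul_smul_comm, Cs_mul_H, smul_add, Algebra.smul_def (h x y), Algebra.smul_def (h x y)]
    congr 1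
    rw [Algebra.smul_def, ← mul_assoc, ← map_mul, mul_comm (h x y)]
  rw [hCx, Finset.mul_sum, Finset.sum_congr rfl (fun y _ => hterm y),
    Finset.sum_add_distrib, map_add, Finsupp.add_apply]
  congr 1
  · rw [map_sum, Finsupp.finset_sum_apply]
    have h1 : ∀ y ∈ (h x).support,
        ((HB ha).repr (h x y • ha.H (cs.simple i * y))) z
          = if y = cs.simple i * z then h x y else 0 := by
      intro y _
      rw [repr_smulH]
      have hcnd : (cs.simple i * y = z) = (y = cs.simple i * z) := by
        apply propext
        constructor
        · intro hyp
          rw [← hyp, cs.simple_mul_simple_cancel_left]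
        · intro hyp
          rw [hyp, cs.simple_mul_simple_cancel_left]
      rw [hcnd]
    rw [Finset.sum_congr rfl h1,
      Finset.sum_ite_eq' (h x).support (cs.simple i * z) (fun y => h x y)]
    split
    · rfl
    · rw [Finsupp.notMem_support_iff.mp (by assumption)]
  · rw [map_sum, Finsupp.finset_sum_apply]
    have h1 : ∀ y ∈ (h x).support,
        ((HB ha).repr (((if cs.length y < cs.length (cs.simple i * y)
            then (T 1 : LaurentPolynomial ℤ) else T (-1)) * h x y) • ha.H y)) z
          = if y = z then (if cs.length y < cs.length (cs.simple i * y)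
              then (T 1 : LaurentPolynomial ℤ) else T (-1)) * h x y else 0 := by
      intro y _
      rw [repr_smulH]
    rw [Finset.sum_congr rfl h1, Finset.sum_ite_eq' (h x).support z]
    split
    · rfl
    · rw [Finsupp.notMem_support_iff.mp (by assumption), mul_zero]

lemma case1 (hC : ∀ x, ha.IsKL bar x (C x))
    (hh : ∀ x, C x = (h x).sum fun y r => r • ha.H y) (i : B) (x : W)
    (hx : cs.length x < cs.length (cs.simple i * x)) :
    ha.Cs i * C x = C (cs.simple i * x)
      + ∑ y ∈ (h x).support,
          (if BruhatLT cs y x ∧ cs.length (cs.simple i * y) < cs.length y then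
            muCoeff (h x y) • C y else 0) := by
  have SL := fun w => supp_lemma ha bar hC hh w
  have SLv : ∀ w y, y ≠ w → VP (h w y) := fun w y hy => (SL w).1 y hy
  have SLb : ∀ w y, ¬ BruhatLE cs y w → h w y = 0 := fun w => (SL w).2.1
  have SLx : ∀ w, h w w = 1 := fun w => (SL w).2.2
  set corr : A := ∑ y ∈ (h x).support,
      (if BruhatLT cs y x ∧ cs.length (cs.simple i * y) < cs.length y then
        muCoeff (h x y) • C y else 0) with hcorr
  have hsxx : cs.simple i * (cs.simple i * x) = x := cs.simple_mul_simple_cancel_left i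
  have hE : ha.Cs i * C x - C (cs.simple i * x) - corr = 0 := by
    apply uniq ha bar
    · rw [map_sub, map_sub, map_mul, d_Cs, (hC x).1, (hC (cs.simple i * x)).1]
      congr 1
      rw [hcorr, map_sum]
      apply Finset.sum_congr rfl
      intro y _
      split
      · rw [map_zsmul, (hC y).1]
      · rw [map_zero]
    · intro z
      rw [map_sub, map_sub, Finsupp.sub_apply, Finsupp.sub_apply,
        reprCs ha hh i x z, reprC ha hh (cs.simple i * x)]
      have hcz : ((HB ha).repr corr) z
          = ∑ y ∈ (h x).support,
            (if BruhatLT cs y x ∧ cs.length (cs.simple i * y) < cs.length y then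
              muCoeff (h x y) • (h y z) else 0) := by
        rw [hcorr, map_sum, Finsupp.finset_sum_apply]
        apply Finset.sum_congr rfl
        intro y _
        rw [apply_ite (fun a => ((HB ha).repr a) z)]
        congr 1
        · rw [map_zsmul, reprC ha hh y, Finsupp.smul_apply]
        · rw [map_zero]; rfl
      rw [hcz]
      have hvp_term : ∀ y, y ≠ z →
          VP (if BruhatLT cs y x ∧ cs.length (cs.simple i * y) < cs.length y then
            muCoeff (h x y) • (h y z) else 0) := by
        intro y hyz
        split
        · exact vp_zsmul _ (SLv y z (Ne.symm hyz))
        · exact vp_zero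
      by_cases hzsx : z = cs.simple i * x
      · -- top coefficient
        subst hzsx
        have e1 : h x (cs.simple i * (cs.simple i * x)) = 1 := by rw [hsxx]; exact SLx x
        have e2 : cs.length (cs.simple i * (cs.simple i * x)) = cs.length x := by rw [hsxx]
        have e3 : h x (cs.simple i * x) = 0 := by
          apply SLb
          intro hle
          have := ble_length hle
          omega
        have e4 : h (cs.simple i * x) (cs.simple i * x) = 1 := SLx _
        have e5 : ¬ (cs.length (cs.simple i * x) < cs.length (cs.simple i * (cs.simple i * x))) := by
          omega
        rw [e1, e3, if_neg e5, e4, mul_zero, add_zero, sub_self]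
        have hterms : ∀ y ∈ (h x).support, VP
            (if BruhatLT cs y x ∧ cs.length (cs.simple i * y) < cs.length y then
              muCoeff (h x y) • (h y (cs.simple i * x)) else 0) := by
          intro y _
          by_cases hyz : y = cs.simple i * x
          · subst hyz
            rw [if_neg]
            · exact vp_zero
            · rintro ⟨hbl, -⟩
              have := blt_length hbl
              omega
          · exact hvp_term y hyz
        rw [zero_sub]
        exact vp_neg (vp_sum hterms)
      · have hkz : VP (h (cs.simple i * x) z) := SLv _ z hzsx
        have hszx : cs.simple i * z ≠ x := by
          intro he
          apply hzsx
          rw [← he, cs.simple_mul_simple_cancel_left]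
        have h1 : VP (h x (cs.simple i * z)) := SLv x _ hszx
        rcases Ne.lt_or_gt (cs.length_simple_mul_ne z i) with hlt | hgt
        · -- descent: ℓ(s z) < ℓ z
          have hzx : z ≠ x := by
            intro he
            subst he
            omega
          have hgz : VP (h x z) := SLv x z hzx
          rw [if_neg (by omega)]
          by_cases hzsupp : z ∈ (h x).support
          · have hzltx : BruhatLT cs z x := by
              refine ⟨?_, hzx⟩
              by_contra hle
              exact (Finsupp.mem_support_iff.mp hzsupp) (SLb x z hle)
            have hcondz : BruhatLT cs z x ∧ cs.length (cs.simple i * z) < cs.length z :=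
              ⟨hzltx, hlt⟩
            rw [← Finset.add_sum_erase _ _ hzsupp, if_pos hcondz, SLx z]
            have hre : h x (cs.simple i * z) + T (-1) * h x z - h (cs.simple i * x) z
                - (muCoeff (h x z) • (1 : LaurentPolynomial ℤ)
                  + ∑ y ∈ (h x).support.erase z,
                    (if BruhatLT cs y x ∧ cs.length (cs.simple i * y) < cs.length y then
                      muCoeff (h x y) • (h y z) else 0))
                = (T (-1) * h x z - muCoeff (h x z) • (1 : LaurentPolynomial ℤ))
                  + h x (cs.simple i * z) - h (cs.simple i * x) z
                  - ∑ y ∈ (h x).support.erase z,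
                    (if BruhatLT cs y x ∧ cs.length (cs.simple i * y) < cs.length y then
                      muCoeff (h x y) • (h y z) else 0) := by
              simp only [zsmul_eq_mul]
              ring
            rw [hre]
            refine vp_sub (vp_sub (vp_add (vp_Tneg1_mul_sub hgz) h1) hkz) ?_
            exact vp_sum (fun y hy => hvp_term y (Finset.ne_of_mem_erase hy))
          · have hgz0 : h x z = 0 := Finsupp.notMem_support_iff.mp hzsupp
            rw [hgz0, mul_zero, add_zero]
            refine vp_sub (vp_sub h1 hkz) ?_
            refine vp_sum (fun y hy => hvp_term y ?_)
            intro he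
            subst he
            exact hzsupp hy
        · -- ascent: ℓ z < ℓ (s z)
          rw [if_pos hgt]
          have h2 : VP (T 1 * h x z) := by
            apply vp_T1_mul
            by_cases hzx : z = x
            · rw [hzx, SLx x]
              exact vp0_one
            · exact (SLv x z hzx).vp0
          refine vp_sub (vp_sub (vp_add h1 h2) hkz) ?_
          refine vp_sum (fun y hy => ?_)
          by_cases hyz : y = z
          · subst hyz
            rw [if_neg (by omega)]
            exact vp_zero
          · exact hvp_term y hyz
  have h1 := sub_eq_iff_eq_add.mp (sub_eq_zero.mp hE)
  rw [h1, add_comm]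

lemma Cs_sq (i : B) : ha.Cs i * ha.Cs i = φ (T 1 + T (-1)) * ha.Cs i := by
  have hc : ∀ (r : R) (a : A), a * φ r = φ r * a := fun r a => (Algebra.commutes r a).symm
  have e1 : ha.H (cs.simple i) * φ (T 1) = φ (T 1) * ha.H (cs.simple i) := hc _ _
  rw [HeckeAlg.Cs]
  calc (ha.H (cs.simple i) + φ (T 1)) * (ha.H (cs.simple i) + φ (T 1))
      = ha.H (cs.simple i) * ha.H (cs.simple i) + ha.H (cs.simple i) * φ (T 1)
        + φ (T 1) * ha.H (cs.simple i) + φ (T 1) * φ (T 1) := by noncomm_ring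
    _ = (1 + (φ (T (-1)) - φ (T 1)) * ha.H (cs.simple i)) + φ (T 1) * ha.H (cs.simple i)
        + φ (T 1) * ha.H (cs.simple i) + φ (T 1) * φ (T 1) := by rw [Hs_sq, e1]
    _ = 1 + φ (T (-1)) * ha.H (cs.simple i) + φ (T 1) * ha.H (cs.simple i)
        + φ (T 1) * φ (T 1) := by rw [sub_mul]; abel
    _ = φ (T (-1)) * φ (T 1) + φ (T (-1)) * ha.H (cs.simple i) + φ (T 1) * ha.H (cs.simple i)
        + φ (T 1) * φ (T 1) := by
        have h1 : φ (T (-1)) * φ (T 1) = (1 : A) := by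
          rw [← map_mul, ← T_add]; norm_num
        rw [h1]
    _ = φ (T 1 + T (-1)) * (ha.H (cs.simple i) + φ (T 1)) := by
        rw [map_add, add_mul, mul_add, mul_add]; abel

lemma case2 (hC : ∀ x, ha.IsKL bar x (C x))
    (hh : ∀ x, C x = (h x).sum fun y r => r • ha.H y) (i : B) :
    ∀ n : ℕ, ∀ x : W, cs.length x ≤ n → cs.length (cs.simple i * x) < cs.length x →
      ha.Cs i * C x = φ (T 1 + T (-1)) * C x := by
  intro n
  induction n with
  | zero =>
    intro x h1 h2
    omega
  | succ n ih =>
    intro x hxn hdesc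
    have hxx : cs.simple i * (cs.simple i * x) = x := cs.simple_mul_simple_cancel_left i
    have hgt : cs.length (cs.simple i * x) < cs.length (cs.simple i * (cs.simple i * x)) := by
      rw [hxx]; exact hdesc
    have hc1 := case1 ha bar hC hh i (cs.simple i * x) hgt
    rw [hxx] at hc1
    set corr : A := ∑ y ∈ (h (cs.simple i * x)).support,
        (if BruhatLT cs y (cs.simple i * x) ∧ cs.length (cs.simple i * y) < cs.length y then
          muCoeff (h (cs.simple i * x) y) • C y else 0) with hcorr
    have hcorr2 : ha.Cs i * corr = φ (T 1 + T (-1)) * corr := by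
      rw [hcorr, Finset.mul_sum, Finset.mul_sum]
      apply Finset.sum_congr rfl
      intro y _
      split
      · rename_i hcond
        rw [mul_smul_comm, mul_smul_comm]
        congr 1
        apply ih
        · have := blt_length hcond.1
          omega
        · exact hcond.2
      · rw [mul_zero, mul_zero]
    have hL : ha.Cs i * (ha.Cs i * C (cs.simple i * x))
        = φ (T 1 + T (-1)) * (C x + corr) := by
      rw [← mul_assoc, Cs_sq, mul_assoc, hc1]
    have hR : ha.Cs i * (ha.Cs i * C (cs.simple i * x))
        = ha.Cs i * C x + φ (T 1 + T (-1)) * corr := by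
      rw [hc1, mul_add, hcorr2]
    rw [hL, mul_add] at hR
    exact (add_right_cancel hR).symm

end Hecke

end KLAux

/-- `C_s C_x = C_{sx} + ∑_{y < x, sy < y} μ(y,x) C_y` if `sx > x`, and
`C_s C_x = (v + v⁻¹) C_x` if `sx < x`. -/
theorem stmt8 {B W : Type*} [Group W] {M : CoxeterMatrix B} (cs : CoxeterSystem M W)
    (A : Type*) [Ring A] [Algebra (LaurentPolynomial ℤ) A] (ha : HeckeAlg cs A)
    (bar : ha.Bar) (C : W → A) (hC : ∀ x, ha.IsKL bar x (C x))
    (h : W → W →₀ LaurentPolynomial ℤ)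
    (hh : ∀ x, C x = (h x).sum fun y r => r • ha.H y)
    (i : B) (x : W) :
    (cs.length (cs.simple i * x) > cs.length x →
      ha.Cs i * C x = C (cs.simple i * x) +
        ∑ y ∈ (h x).support,
          if BruhatLT cs y x ∧ cs.length (cs.simple i * y) < cs.length y then
            muCoeff (h x y) • C y
          else 0) ∧
    (cs.length (cs.simple i * x) < cs.length x →
      ha.Cs i * C x = algebraMap (LaurentPolynomial ℤ) A (T 1 + T (-1)) * C x) := by
  constructor
  · intro hgt
    exact KLAux.case1 ha bar hC hh i x hgt
  · intro hlt
    exact KLAux.case2 ha bar hC hh i (cs.length x) x le_rfl hlt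
end

section
/- For every s ∈ S, left multiplication by b(C_s) = H_s - v⁻¹ is self-adjoint with respect to the form ⟨·,·⟩: ⟨b(C_s) H, H'⟩ = ⟨H, b(C_s) H'⟩ for all H, H'. -/
open LaurentPolynomial

variable {B W : Type*} [Group W] {M : CoxeterMatrix B}

open scoped Classical
open HeckeAlg

section Aux

variable {B W : Type*} [Group W] {M : CoxeterMatrix B} {cs : CoxeterSystem M W}
  {A : Type*} [Ring A] [Algebra (LaurentPolynomial ℤ) A]

private lemma H_eq_smul (ha : HeckeAlg cs A) (x : W) :
    ha.H x = (T (cs.length x : ℤ) : LaurentPolynomial ℤ) • ha.Tb x := by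
  rw [HeckeAlg.H, Algebra.smul_def]

private lemma Tb_eq_smul (ha : HeckeAlg cs A) (x : W) :
    ha.Tb x = (T (-(cs.length x : ℤ)) : LaurentPolynomial ℤ) • ha.H x := by
  rw [H_eq_smul, smul_smul, ← T_add, neg_add_cancel, T_zero, one_smul]

private lemma Tb_sq (ha : HeckeAlg cs A) (i : B) :
    ha.Tb (cs.simple i) * ha.Tb (cs.simple i) =
      (T (-2) : LaurentPolynomial ℤ) • ha.Tb (cs.simple i) - ha.Tb (cs.simple i)
        + algebraMap (LaurentPolynomial ℤ) A (T (-2)) := by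
  have hc : ha.Tb (cs.simple i) * algebraMap (LaurentPolynomial ℤ) A (T (-2))
      = (T (-2) : LaurentPolynomial ℤ) • ha.Tb (cs.simple i) := by
    rw [← Algebra.commutes, ← Algebra.smul_def]
  have h := ha.Tb_quadratic i
  rw [add_mul, one_mul, mul_sub, hc] at h
  apply eq_of_sub_eq_zero
  rw [← h]
  abel

private lemma Hs_mul_up (ha : HeckeAlg cs A) (i : B) (x : W)
    (h : cs.length (cs.simple i * x) = cs.length x + 1) :
    ha.H (cs.simple i) * ha.H x = ha.H (cs.simple i * x) := by
  rw [H_eq_smul, H_eq_smul, H_eq_smul, smul_mul_assoc, mul_smul_comm, smul_smul, ← T_add,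
    ha.Tb_mul _ _ (by rw [h, cs.length_simple]; omega), h, cs.length_simple]
  push_cast
  ring_nf

private lemma Hs_mul_down (ha : HeckeAlg cs A) (i : B) (x : W)
    (h : cs.length (cs.simple i * x) + 1 = cs.length x) :
    ha.H (cs.simple i) * ha.H x = ha.H (cs.simple i * x)
      + ((T (-1) - T 1 : LaurentPolynomial ℤ)) • ha.H x := by
  have hx : cs.simple i * (cs.simple i * x) = x := by
    rw [← mul_assoc, cs.simple_mul_simple_self, one_mul]
  have hTbx : ha.Tb x = ha.Tb (cs.simple i) * ha.Tb (cs.simple i * x) := by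
    rw [ha.Tb_mul _ _ (by rw [hx, cs.length_simple]; omega), hx]
  have hcen : algebraMap (LaurentPolynomial ℤ) A (T (-2)) * ha.Tb (cs.simple i * x)
      = (T (-2) : LaurentPolynomial ℤ) • ha.Tb (cs.simple i * x) := (Algebra.smul_def _ _).symm
  rw [H_eq_smul, H_eq_smul, H_eq_smul, smul_mul_assoc, mul_smul_comm, smul_smul,
    ← T_add, cs.length_simple]
  conv_lhs => rw [hTbx, ← mul_assoc, Tb_sq, add_mul, sub_mul, smul_mul_assoc,
    ← hTbx, hcen]
  match_scalars
  · simp only [mul_one, one_mul, mul_sub, sub_mul, ← T_add]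
    congr 1 <;> congr 1 <;> omega
  · simp only [mul_one, ← T_add]
    congr 1
    omega

private lemma eps_mul (ha : HeckeAlg cs A) (i : B) (x : W) :
    (ha.H (cs.simple i) - algebraMap (LaurentPolynomial ℤ) A (T (-1))) * ha.H x
      = ha.H (cs.simple i * x)
        - (if cs.length (cs.simple i * x) = cs.length x + 1 then (T (-1) : LaurentPolynomial ℤ)
            else T 1) • ha.H x := by
  have halg : algebraMap (LaurentPolynomial ℤ) A (T (-1)) * ha.H x
      = (T (-1) : LaurentPolynomial ℤ) • ha.H x := (Algebra.smul_def _ _).symm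
  rcases cs.length_simple_mul x i with h | h
  · rw [sub_mul, Hs_mul_up ha i x h, if_pos h, halg]
  · rw [sub_mul, Hs_mul_down ha i x h, if_neg (by omega), halg]
    module

private lemma key_basis (ha : HeckeAlg cs A)
    (Bf : A →ₗ[LaurentPolynomial ℤ] A →ₗ[LaurentPolynomial ℤ] LaurentPolynomial ℤ)
    (hBf : ∀ x y : W, Bf (ha.H x) (ha.H y) = if x = y then 1 else 0)
    (i : B) (x y : W) :
    Bf ((ha.H (cs.simple i) - algebraMap (LaurentPolynomial ℤ) A (T (-1))) * ha.H x) (ha.H y)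
      = Bf (ha.H x)
          ((ha.H (cs.simple i) - algebraMap (LaurentPolynomial ℤ) A (T (-1))) * ha.H y) := by
  rw [eps_mul, eps_mul, map_sub, map_sub, LinearMap.sub_apply, map_smul, map_smul,
    LinearMap.smul_apply, hBf, hBf, hBf]
  have hiff : cs.simple i * x = y ↔ x = cs.simple i * y := by
    constructor
    · rintro rfl; rw [← mul_assoc, cs.simple_mul_simple_self, one_mul]
    · rintro rfl; rw [← mul_assoc, cs.simple_mul_simple_self, one_mul]
  by_cases hxy : x = y
  · subst hxy
    simp [hiff]
  · simp only [if_neg hxy, smul_zero, sub_zero]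
    by_cases hs : cs.simple i * x = y
    · rw [if_pos hs, if_pos (hiff.mp hs)]
    · rw [if_neg hs, if_neg (fun hh => hs (hiff.mpr hh))]

end Aux

/-- left multiplication by `b(C_s) = H_s - v⁻¹` is self-adjoint for the
form `⟨H_x, H_y⟩ = δ_{x,y}`. -/
theorem stmt13 {B W : Type*} [Group W] {M : CoxeterMatrix B} (cs : CoxeterSystem M W)
    (A : Type*) [Ring A] [Algebra (LaurentPolynomial ℤ) A] (ha : HeckeAlg cs A)
    (Bf : A →ₗ[LaurentPolynomial ℤ] A →ₗ[LaurentPolynomial ℤ] LaurentPolynomial ℤ)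
    (hBf : ∀ x y : W, Bf (ha.H x) (ha.H y) = if x = y then 1 else 0)
    (i : B) (a a' : A) :
    Bf ((ha.H (cs.simple i) - algebraMap (LaurentPolynomial ℤ) A (T (-1))) * a) a' =
      Bf a ((ha.H (cs.simple i) - algebraMap (LaurentPolynomial ℤ) A (T (-1))) * a') := by
  set c := ha.H (cs.simple i) - algebraMap (LaurentPolynomial ℤ) A (T (-1)) with hc
  let L : A →ₗ[LaurentPolynomial ℤ] A := LinearMap.mulLeft (LaurentPolynomial ℤ) c
  have hmaps : Bf.compl₁₂ L LinearMap.id = Bf.compl₁₂ LinearMap.id L := by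
    apply ha.Tb.ext; intro x
    apply ha.Tb.ext; intro y
    simp only [LinearMap.compl₁₂_apply, LinearMap.id_coe, id_eq, LinearMap.mulLeft_apply, L]
    rw [Tb_eq_smul ha x, Tb_eq_smul ha y, mul_smul_comm, mul_smul_comm]
    simp only [map_smul, LinearMap.smul_apply]
    rw [key_basis ha Bf hBf i x y, smul_comm]
  have h2 := DFunLike.congr_fun (DFunLike.congr_fun hmaps a) a'
  simpa only [LinearMap.compl₁₂_apply, LinearMap.id_coe, id_eq, LinearMap.mulLeft_apply,
    L] using h2
end

section
/- Assume W is finite with longest element w₀. For every x ∈ W, the element P_x H_{w₀}⁻¹ is self-dual under the bar involution d; equivalently, P_x = C^x H_{w₀} for some bar-invariant C^x. -/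
open LaurentPolynomial

variable {B W : Type*} [Group W] {M : CoxeterMatrix B}

open scoped Classical
open HeckeAlg

namespace CoxStmt17
open CoxeterSystem List

variable {B W : Type*} [Group W] {M : CoxeterMatrix B} (cs : CoxeterSystem M W)

/-- The type on which the sign action lives. -/
abbrev SA := {t : W // cs.IsReflection t} × ℤˣ

lemma conj_refl_simple {t : W} (ht : cs.IsReflection t) (i : B) :
    cs.IsReflection (cs.simple i * t * cs.simple i) := by
  have := ht.conj (cs.simple i); rwa [cs.inv_simple] at this

/-- The sign action of a simple generator. -/
noncomputable def sigmaFun (i : B) : SA cs → SA cs :=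
  fun p => (⟨cs.simple i * p.1.val * cs.simple i, conj_refl_simple cs p.1.prop i⟩,
    if p.1.val = cs.simple i then -p.2 else p.2)

lemma simple_conj_conj (i : B) (t : W) :
    cs.simple i * (cs.simple i * t * cs.simple i) * cs.simple i = t := by
  have h : cs.simple i * cs.simple i = 1 := cs.simple_mul_simple_self i
  calc cs.simple i * (cs.simple i * t * cs.simple i) * cs.simple i
      = (cs.simple i * cs.simple i) * t * (cs.simple i * cs.simple i) := by group
    _ = t := by rw [h]; group

lemma sigmaFun_involutive (i : B) : Function.Involutive (sigmaFun cs i) := by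
  rintro ⟨⟨t, ht⟩, ε⟩
  simp only [sigmaFun]
  by_cases h : t = cs.simple i
  · subst h
    simp [cs.simple_mul_simple_self, simple_conj_conj]
  · have h2 : cs.simple i * t * cs.simple i ≠ cs.simple i := by
      intro hc
      apply h
      have := congrArg (fun z => cs.simple i * z * cs.simple i) hc
      simp only [simple_conj_conj] at this
      rw [this, cs.simple_mul_simple_self, one_mul]
    simp only [h2, if_false, h, if_false]
    ext
    · exact simple_conj_conj cs i t
    · rfl

/-- The sign action permutation. -/
noncomputable def sigma (i : B) : Equiv.Perm (SA cs) := (sigmaFun_involutive cs i).toPerm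

lemma sigma_apply (i : B) (p : SA cs) : sigma cs i p = sigmaFun cs i p := rfl

lemma ris_cons (i : B) (ω : List B) :
    cs.rightInvSeq (i :: ω) =
      ((cs.wordProd ω)⁻¹ * cs.simple i * cs.wordProd ω) :: cs.rightInvSeq ω := rfl

/-- Evaluation of a word of sign permutations. -/
lemma prod_map_sigma_apply (ω : List B) (t : {t : W // cs.IsReflection t}) (ε : ℤˣ) :
    ((ω.map (sigma cs)).prod) (t, ε) =
      (⟨cs.wordProd ω * t.val * (cs.wordProd ω)⁻¹, t.prop.conj _⟩,
        (-1) ^ (List.count t.val (cs.rightInvSeq ω)) * ε) := by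
  induction ω with
  | nil =>
    simp only [map_nil, prod_nil, rightInvSeq_nil, count_nil, pow_zero, one_mul,
      Equiv.Perm.coe_one, id_eq, wordProd_nil]
    ext <;> simp
  | cons i ω ih =>
    rw [map_cons, prod_cons, Equiv.Perm.mul_apply, ih, sigma_apply]
    have hcount : List.count t.val (cs.rightInvSeq (i :: ω)) =
        List.count t.val (cs.rightInvSeq ω) +
          (if (cs.wordProd ω)⁻¹ * cs.simple i * cs.wordProd ω = t.val then 1 else 0) := by
      rw [ris_cons, List.count_cons]
      by_cases h : (cs.wordProd ω)⁻¹ * cs.simple i * cs.wordProd ω = t.val <;> simp [h]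
    rw [hcount]
    have hfst : cs.simple i * (cs.wordProd ω * t.val * (cs.wordProd ω)⁻¹) * cs.simple i
        = cs.wordProd (i :: ω) * t.val * (cs.wordProd (i :: ω))⁻¹ := by
      rw [wordProd_cons, mul_inv_rev, cs.inv_simple]; group
    by_cases hc : cs.wordProd ω * t.val * (cs.wordProd ω)⁻¹ = cs.simple i
    · have hc' : (cs.wordProd ω)⁻¹ * cs.simple i * cs.wordProd ω = t.val := by
        rw [← hc]; group
      rw [if_pos hc']
      refine Prod.ext_iff.mpr ⟨Subtype.ext hfst, ?_⟩
      show (if (cs.wordProd ω * t.val * (cs.wordProd ω)⁻¹ : W) = cs.simple i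
        then -((-1) ^ (List.count t.val (cs.rightInvSeq ω)) * ε)
        else (-1) ^ (List.count t.val (cs.rightInvSeq ω)) * ε) = _
      rw [if_pos hc, pow_succ, mul_neg_one, neg_mul]
    · have hc2 : ¬ ((cs.wordProd ω)⁻¹ * cs.simple i * cs.wordProd ω = t.val) := by
        intro h; exact hc (by rw [← h]; group)
      rw [if_neg hc2, add_zero]
      refine Prod.ext_iff.mpr ⟨Subtype.ext hfst, ?_⟩
      show (if (cs.wordProd ω * t.val * (cs.wordProd ω)⁻¹ : W) = cs.simple i
        then -((-1) ^ (List.count t.val (cs.rightInvSeq ω)) * ε)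
        else (-1) ^ (List.count t.val (cs.rightInvSeq ω)) * ε) = _
      rw [if_neg hc]


section Dihedral

lemma simple_conj_pow (i i' : B) (a : ℕ) :
    cs.simple i' * (cs.simple i * cs.simple i') ^ a * cs.simple i' =
      ((cs.simple i * cs.simple i') ^ a)⁻¹ := by
  have h : cs.simple i' * (cs.simple i * cs.simple i') * (cs.simple i')⁻¹
      = (cs.simple i * cs.simple i')⁻¹ := by
    rw [cs.inv_simple, mul_inv_rev, cs.inv_simple, cs.inv_simple]
    rw [← mul_assoc, cs.simple_mul_simple_cancel_right]
  calc cs.simple i' * (cs.simple i * cs.simple i') ^ a * cs.simple i'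
      = cs.simple i' * (cs.simple i * cs.simple i') ^ a * (cs.simple i')⁻¹ := by
        rw [cs.inv_simple]
    _ = (cs.simple i' * (cs.simple i * cs.simple i') * (cs.simple i')⁻¹) ^ a := by
        rw [conj_pow]
    _ = ((cs.simple i * cs.simple i')⁻¹) ^ a := by rw [h]
    _ = ((cs.simple i * cs.simple i') ^ a)⁻¹ := by rw [inv_pow]

lemma pow_inv_simple_comm (i i' : B) (a : ℕ) :
    ((cs.simple i * cs.simple i') ^ a)⁻¹ * cs.simple i'
      = cs.simple i' * (cs.simple i * cs.simple i') ^ a := by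
  have := simple_conj_pow cs i i' a
  calc ((cs.simple i * cs.simple i') ^ a)⁻¹ * cs.simple i'
      = (cs.simple i' * (cs.simple i * cs.simple i') ^ a * cs.simple i') * cs.simple i' := by
        rw [this]
    _ = cs.simple i' * (cs.simple i * cs.simple i') ^ a := by
        rw [cs.simple_mul_simple_cancel_right]

section GrpHelp
variable {G : Type*} [Group G] (p q : G)

lemma grp_even (hp : p⁻¹ = p) (hq : q⁻¹ = q) (a : ℕ) :
    ((p*q)^a)⁻¹ * (q * (p*q)^a) = q * (p*q)^(2*a) := by
  set c := p * q with hc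
  have hcinv : c⁻¹ = q * p := by rw [hc, mul_inv_rev, hp, hq]
  have key3 : ∀ x : G, c⁻¹ * (q * (c * x)) = q * (c * (c * x)) := by
    intro x
    rw [hcinv]
    simp only [hc, mul_assoc]
  induction a with
  | zero => simp
  | succ a ih =>
    have h1 : (c^(a+1))⁻¹ * (q * c^(a+1)) = c⁻¹ * (((c^a)⁻¹ * (q * c^a)) * c) := by
      rw [pow_succ c a, mul_inv_rev]
      simp only [mul_assoc]
    rw [h1, ih]
    have h2 : (q * c^(2*a)) * c = q * c^(2*a+1) := by
      simp only [mul_assoc, ← pow_succ]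
    rw [h2, pow_succ' c (2*a), key3 (c^(2*a))]
    have e : 2*(a+1) = 2*a + 1 + 1 := by omega
    rw [e, pow_succ' c (2*a+1), pow_succ' c (2*a)]

lemma grp_odd (hp : p⁻¹ = p) (hq : q⁻¹ = q) (a : ℕ) :
    ((p*q)^a)⁻¹ * (q * (p * (q * (p*q)^a))) = q * (p*q)^(2*a+1) := by
  set c := p * q with hc
  have hcinv : c⁻¹ = q * p := by rw [hc, mul_inv_rev, hp, hq]
  have key4 : ∀ y : G, q * (p * (q * y)) = c⁻¹ * (q * y) := by
    intro y
    rw [hcinv]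
    simp only [hc, mul_assoc]
  rw [key4 ((p*q)^a)]
  show (c^a)⁻¹ * (c⁻¹ * (q * c^a)) = _
  have h1 : (c^a)⁻¹ * (c⁻¹ * (q * c^a)) = (c^(a+1))⁻¹ * (q * c^a) := by
    rw [pow_succ' c a, mul_inv_rev c (c^a)]
    simp only [mul_assoc]
  rw [h1]
  have h2 : q * c^a = (q * c^(a+1)) * c⁻¹ := by
    rw [pow_succ c a]
    simp [mul_assoc]
  rw [h2]
  have h3 : (c^(a+1))⁻¹ * ((q * c^(a+1)) * c⁻¹) = ((c^(a+1))⁻¹ * (q * c^(a+1))) * c⁻¹ := by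
    simp only [mul_assoc]
  rw [h3, grp_even p q hp hq (a+1)]
  have e : 2*(a+1) = (2*a+1) + 1 := by omega
  rw [e, pow_succ c (2*a+1)]
  simp [mul_assoc]

end GrpHelp

/-- conjugation formula in dihedral subgroups -/
lemma dihedral_conj (i i' : B) (n : ℕ) :
    (cs.wordProd (alternatingWord i i' n))⁻¹ *
      cs.simple (if Even n then i' else i) * cs.wordProd (alternatingWord i i' n)
      = cs.simple i' * (cs.simple i * cs.simple i') ^ n := by
  rcases Nat.even_or_odd n with he | ho
  · obtain ⟨a, rfl⟩ := he
    rw [if_pos ⟨a, rfl⟩]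
    rw [cs.prod_alternatingWord_eq_mul_pow]
    rw [if_pos ⟨a, rfl⟩]
    have hdiv : (a + a) / 2 = a := by omega
    rw [hdiv, one_mul]
    have h := grp_even (cs.simple i) (cs.simple i') (cs.inv_simple i) (cs.inv_simple i') a
    rw [two_mul] at h
    rw [← h]
    simp only [mul_assoc]
  · obtain ⟨a, rfl⟩ := ho
    have hne : ¬ Even (2*a+1) := by
      intro h
      exact (Nat.even_add_one.mp h) (even_two_mul a)
    rw [if_neg hne]
    rw [cs.prod_alternatingWord_eq_mul_pow]
    rw [if_neg hne]
    have hdiv : (2 * a + 1) / 2 = a := by omega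
    rw [hdiv]
    rw [mul_inv_rev, cs.inv_simple]
    have h := grp_odd (cs.simple i) (cs.simple i') (cs.inv_simple i) (cs.inv_simple i') a
    rw [← h]
    simp only [mul_assoc]

lemma drop_one_alt (i i' : B) (n : ℕ) :
    (alternatingWord i i' (n + 1)).drop 1 = alternatingWord i i' n := by
  rw [alternatingWord_succ']
  rfl

/-- entries of the right inversion sequence of an alternating word -/
lemma ris_alt_getD (i i' : B) : ∀ n k, k < n →
    (cs.rightInvSeq (alternatingWord i i' n)).getD k 1
      = cs.simple i' * (cs.simple i * cs.simple i') ^ (n - 1 - k) := by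
  intro n
  induction n with
  | zero => omega
  | succ n ih =>
    intro k hk
    rw [alternatingWord_succ', ris_cons]
    match k with
    | 0 =>
      show ((cs.wordProd (alternatingWord i i' n))⁻¹ *
        cs.simple (if Even n then i' else i) * cs.wordProd (alternatingWord i i' n)) = _
      rw [dihedral_conj cs i i' n]
      congr 1
    | (k+1) =>
      show (cs.rightInvSeq (alternatingWord i i' n)).getD k 1 = _
      rw [ih k (by omega)]
      congr 2
      omega

lemma count_ris_alt_even (i i' : B) (t : W) :
    Even (List.count t (cs.rightInvSeq (alternatingWord i i' (2 * M i i')))) := by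
  set m := M i i' with hm
  set L := cs.rightInvSeq (alternatingWord i i' (2 * m)) with hL
  have hlen : L.length = 2 * m := by
    rw [hL, length_rightInvSeq, length_alternatingWord]
  have hpow : (cs.simple i * cs.simple i') ^ m = 1 := cs.simple_mul_simple_pow i i'
  have htd : L.take m = L.drop m := by
    apply List.ext_getElem
    · rw [List.length_take, List.length_drop, hlen]; omega
    · intro k h1 h2
      rw [List.getElem_take, List.getElem_drop]
      have hk : k < m := by
        rw [List.length_take, hlen] at h1; omega
      have e1 : L[k] = L.getD k 1 := by rw [List.getD_eq_getElem L 1 (by omega)]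
      have e2 : L[m + k] = L.getD (m + k) 1 := by
        rw [List.getD_eq_getElem L 1 (by omega)]
      rw [e1, e2, hL, ris_alt_getD cs i i' _ k (by omega),
        ris_alt_getD cs i i' _ (m + k) (by omega)]
      have harith : 2 * m - 1 - k = (m - 1 - k) + m := by omega
      rw [harith, pow_add, hpow, mul_one]
      congr 2
      omega
  have : List.count t L = 2 * List.count t (L.take m) := by
    conv_lhs => rw [← List.take_append_drop m L, List.count_append, ← htd]
    omega
  exact ⟨List.count t (L.take m), by omega⟩

end Dihedral

section Lift

lemma pow_sigma_eq_prod_map (i i' : B) (n : ℕ) :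
    (sigma cs i * sigma cs i') ^ n = ((alternatingWord i i' (2 * n)).map (sigma cs)).prod := by
  induction n with
  | zero => simp [alternatingWord]
  | succ n ih =>
    have halt : alternatingWord i i' (2 * (n+1)) = i :: i' :: alternatingWord i i' (2 * n) := by
      have e : 2 * (n+1) = (2*n + 1) + 1 := by omega
      rw [e, alternatingWord_succ', alternatingWord_succ']
      have h1 : ¬ Even (2*n+1) := by
        intro h; exact (Nat.even_add_one.mp h) (even_two_mul n)
      rw [if_neg h1, if_pos (even_two_mul n)]
    rw [halt, List.map_cons, List.map_cons, List.prod_cons, List.prod_cons, ← ih,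
      pow_succ']
    rw [mul_assoc]

lemma sigma_liftable : M.IsLiftable (fun i => sigma cs i) := by
  intro i i'
  rw [pow_sigma_eq_prod_map]
  have hprod : cs.wordProd (alternatingWord i i' (2 * M i i')) = 1 := by
    rw [cs.prod_alternatingWord_eq_mul_pow]
    rw [if_pos ⟨M i i', by omega⟩]
    have : 2 * M i i' / 2 = M i i' := by omega
    rw [this, one_mul, cs.simple_mul_simple_pow]
  refine Equiv.ext ?_
  rintro ⟨t, ε⟩
  have hcount := count_ris_alt_even cs i i' t.val
  rw [Equiv.Perm.one_apply, prod_map_sigma_apply, Even.neg_one_pow hcount, hprod]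
  exact Prod.ext_iff.mpr ⟨Subtype.ext (by simp), one_mul ε⟩

/-- The sign representation `W →* Perm (SA cs)`. -/
noncomputable def signRep : W →* Equiv.Perm (SA cs) :=
  cs.lift ⟨fun i => sigma cs i, sigma_liftable cs⟩

lemma signRep_word (ω : List B) : signRep cs (cs.wordProd ω) = ((ω.map (sigma cs)).prod) := by
  rw [wordProd]
  rw [map_list_prod]
  congr 1
  rw [List.map_map]
  apply List.map_congr_left
  intro i _
  simp [signRep, cs.lift_apply_simple]

/-- The sign `η(w,t)`. -/
noncomputable def eta (w : W) (t : {t : W // cs.IsReflection t}) : ℤˣ :=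
  ((signRep cs w) (t, 1)).2

lemma eta_eq_count (ω : List B) (t : {t : W // cs.IsReflection t}) :
    eta cs (cs.wordProd ω) t = (-1) ^ (List.count t.val (cs.rightInvSeq ω)) := by
  unfold eta
  rw [signRep_word, prod_map_sigma_apply, mul_one]

lemma signRep_apply (w : W) (t : {t : W // cs.IsReflection t}) (ε : ℤˣ) :
    (signRep cs w) (t, ε) = (⟨w * t.val * w⁻¹, t.prop.conj w⟩, eta cs w t * ε) := by
  obtain ⟨ω, rfl⟩ := cs.wordProd_surjective w
  rw [signRep_word, prod_map_sigma_apply, eta_eq_count]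

lemma eta_mul (u v : W) (t : {t : W // cs.IsReflection t}) :
    eta cs (u * v) t = eta cs u ⟨v * t.val * v⁻¹, t.prop.conj v⟩ * eta cs v t := by
  have h : signRep cs (u * v) (t, 1) = signRep cs u (signRep cs v (t, 1)) := by
    rw [map_mul]; rfl
  rw [signRep_apply, signRep_apply, signRep_apply] at h
  have h2 := congrArg Prod.snd h
  simp only [mul_one] at h2
  exact h2

lemma eta_self (t : {t : W // cs.IsReflection t}) : eta cs t.val t = -1 := by
  obtain ⟨u, k, hk⟩ := t.prop
  have hs : u⁻¹ * t.val * u⁻¹⁻¹ = cs.simple k := by rw [hk]; group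
  have hsimple : ∀ ε : ℤˣ, signRep cs (cs.simple k) (⟨cs.simple k, cs.isReflection_simple k⟩, ε)
      = (⟨cs.simple k, cs.isReflection_simple k⟩, -ε) := by
    intro ε
    have hrep : signRep cs (cs.simple k) = sigma cs k := by
      simp [signRep, cs.lift_apply_simple]
    rw [hrep, sigma_apply]
    unfold sigmaFun
    simp only [if_pos rfl]
    refine Prod.ext_iff.mpr ⟨Subtype.ext ?_, rfl⟩
    show cs.simple k * cs.simple k * cs.simple k = cs.simple k
    rw [cs.simple_mul_simple_self, one_mul]
  have h1 : signRep cs u⁻¹ (t, 1) = (⟨cs.simple k, cs.isReflection_simple k⟩,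
      eta cs u⁻¹ t * 1) := by
    rw [signRep_apply]
    exact Prod.ext_iff.mpr ⟨Subtype.ext hs, rfl⟩
  have h2 : signRep cs u (signRep cs u⁻¹ (t, 1)) = (t, 1) := by
    rw [← Equiv.Perm.mul_apply, ← map_mul, mul_inv_cancel, map_one]
    rfl
  rw [h1, signRep_apply] at h2
  have h2' := congrArg Prod.snd h2
  simp only [mul_one] at h2'
  have hdecomp : signRep cs t.val = signRep cs u *
      (signRep cs (cs.simple k) * signRep cs u⁻¹) := by
    rw [← map_mul, ← map_mul]
    congr 1
    rw [hk, mul_assoc]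
  have h4 : signRep cs t.val (t, 1)
      = signRep cs u (signRep cs (cs.simple k) (signRep cs u⁻¹ (t, 1))) := by
    rw [hdecomp, Equiv.Perm.mul_apply, Equiv.Perm.mul_apply]
  rw [h1, hsimple, signRep_apply, signRep_apply] at h4
  have h4' := congrArg Prod.snd h4
  simp only [mul_one] at h4'
  rw [h4', mul_neg, h2']

end Lift

section Main

lemma length_lt_of_eta_neg (w : W) (t : {t : W // cs.IsReflection t})
    (h : eta cs w t = -1) : cs.length (w * t.val) < cs.length w := by
  obtain ⟨ω, hlen, hw⟩ := cs.exists_reduced_word w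
  replace hlen : ω.length = cs.length w := by rw [hw]; exact hlen.symm
  have hodd : Odd (List.count t.val (cs.rightInvSeq ω)) := by
    have hc := eta_eq_count cs ω t
    rw [← hw, h] at hc
    by_contra hev
    rw [Nat.not_odd_iff_even] at hev
    rw [Even.neg_one_pow hev] at hc
    exact (by decide : ¬ ((1 : ℤˣ) = -1)) hc.symm
  have hmem : t.val ∈ cs.rightInvSeq ω := by
    have hpos : 0 < List.count t.val (cs.rightInvSeq ω) := by
      rcases hodd with ⟨k, hk⟩; omega
    exact List.count_pos_iff.mp hpos
  obtain ⟨n, hn, hnt⟩ := List.getElem_of_mem hmem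
  rw [cs.length_rightInvSeq] at hn
  have hprod := cs.wordProd_mul_getD_rightInvSeq ω n
  rw [List.getD_eq_getElem _ 1 (by rw [cs.length_rightInvSeq]; omega), hnt] at hprod
  have hle : cs.length (cs.wordProd (ω.eraseIdx n)) ≤ (ω.eraseIdx n).length :=
    cs.length_wordProd_le _
  rw [List.length_eraseIdx_of_lt hn] at hle
  rw [← hw] at hprod
  rw [hprod]
  omega

theorem eta_neg_iff (w : W) (t : {t : W // cs.IsReflection t}) :
    eta cs w t = -1 ↔ cs.length (w * t.val) < cs.length w := by
  constructor
  · exact length_lt_of_eta_neg cs w t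
  · intro hlt
    have hww : w = (w * t.val) * t.val := by
      rw [mul_assoc, t.prop.mul_self, mul_one]
    have hconj : (⟨t.val * t.val * t.val⁻¹, t.prop.conj t.val⟩ :
        {t : W // cs.IsReflection t}) = t := Subtype.ext (by group)
    have hmul := eta_mul cs (w * t.val) t.val t
    rw [hconj, eta_self, ← hww] at hmul
    have hne : eta cs (w * t.val) t ≠ -1 := by
      intro hneg
      have hlt2 := length_lt_of_eta_neg cs (w * t.val) t hneg
      rw [← hww] at hlt2
      omega
    have h1 : eta cs (w * t.val) t = 1 := (Int.units_eq_one_or _).resolve_right hne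
    rw [hmul, h1, one_mul]

lemma odd_count_ris (ω : List B) (t : {t : W // cs.IsReflection t})
    (h : cs.length (cs.wordProd ω * t.val) < cs.length (cs.wordProd ω)) :
    Odd (List.count t.val (cs.rightInvSeq ω)) := by
  have hc := (eta_neg_iff cs (cs.wordProd ω) t).mpr h
  rw [eta_eq_count] at hc
  by_contra hev
  rw [Nat.not_odd_iff_even] at hev
  rw [Even.neg_one_pow hev] at hc
  exact (by decide : ¬ ((1 : ℤˣ) = -1)) hc

lemma ris_append (α β : List B) : cs.rightInvSeq (α ++ β) =
    (cs.rightInvSeq α).map (fun u => (cs.wordProd β)⁻¹ * u * cs.wordProd β)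
      ++ cs.rightInvSeq β := by
  induction α with
  | nil => simp
  | cons i α ih =>
    rw [List.cons_append, ris_cons, ris_cons, ih, List.map_cons, List.cons_append]
    congr 1
    rw [wordProd_append, mul_inv_rev]
    group

end Main

section Finite

variable [Fintype W]

/-- the finset of reflections -/
noncomputable def RF : Finset W := Finset.univ.filter cs.IsReflection

lemma list_len_eq_card (L : List W) (hrefl : ∀ u ∈ L, cs.IsReflection u)
    (hcount : ∀ t : W, cs.IsReflection t → List.count t L = 1) :
    L.length = (RF cs).card := by
  have h1 : (↑L : Multiset W).toFinset = RF cs := by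
    ext u
    simp only [Multiset.mem_toFinset, Multiset.mem_coe, RF, Finset.mem_filter,
      Finset.mem_univ, true_and]
    constructor
    · exact hrefl u
    · intro hu
      have hcu := hcount u hu
      exact List.count_pos_iff.mp (by omega)
  calc L.length = Multiset.card (↑L : Multiset W) := by rw [Multiset.coe_card]
    _ = ∑ a ∈ (↑L : Multiset W).toFinset, Multiset.count a (↑L : Multiset W) :=
        (Multiset.toFinset_sum_count_eq _).symm
    _ = ∑ a ∈ RF cs, Multiset.count a (↑L : Multiset W) := by rw [h1]
    _ = ∑ _a ∈ RF cs, 1 := by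
        apply Finset.sum_congr rfl
        intro t ht
        simp only [RF, Finset.mem_filter] at ht
        rw [Multiset.coe_count]
        exact hcount t ht.2
    _ = (RF cs).card := by simp

theorem length_compl (w0 : W) (hw0 : ∀ u : W, cs.length u ≤ cs.length w0) (x : W) :
    cs.length x + cs.length (x⁻¹ * w0) = cs.length w0 := by
  have hinv : ∀ t : W, cs.IsReflection t → cs.length (w0 * t) < cs.length w0 := by
    intro t ht
    have hne := ht.length_mul_left_ne w0
    have := hw0 (w0 * t)
    omega
  -- step 1 : ℓ w0 = card RF
  obtain ⟨ω₀, hlen₀, hw₀⟩ := cs.exists_reduced_word w0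
  replace hlen₀ : ω₀.length = cs.length w0 := by rw [hw₀]; exact hlen₀.symm
  have hred₀ : cs.IsReduced ω₀ := by
    unfold CoxeterSystem.IsReduced
    rw [← hw₀, hlen₀]
  have hcard : cs.length w0 = (RF cs).card := by
    rw [← hlen₀, ← cs.length_rightInvSeq ω₀]
    apply list_len_eq_card
    · intro u hu
      exact cs.isReflection_of_mem_rightInvSeq ω₀ hu
    · intro t ht
      have hodd := odd_count_ris cs ω₀ ⟨t, ht⟩ (by rw [← hw₀]; exact hinv t ht)
      have hle := List.nodup_iff_count_le_one.mp (hred₀.nodup_rightInvSeq) t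
      rcases hodd with ⟨k, hk⟩
      have hk' : List.count t (cs.rightInvSeq ω₀) = 2 * k + 1 := hk
      omega
  -- step 2 : concatenated word
  obtain ⟨α, hlα, hxα⟩ := cs.exists_reduced_word x
  replace hlα : α.length = cs.length x := by rw [hxα]; exact hlα.symm
  obtain ⟨β, hlβ, hvβ⟩ := cs.exists_reduced_word (x⁻¹ * w0)
  replace hlβ : β.length = cs.length (x⁻¹ * w0) := by rw [hvβ]; exact hlβ.symm
  have hredα : cs.IsReduced α := by unfold CoxeterSystem.IsReduced; rw [← hxα, hlα]
  have hredβ : cs.IsReduced β := by unfold CoxeterSystem.IsReduced; rw [← hvβ, hlβ]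
  have hαβ : cs.wordProd (α ++ β) = w0 := by
    rw [wordProd_append, ← hxα, ← hvβ]
    group
  have hlen2 : (cs.rightInvSeq (α ++ β)).length
      = cs.length x + cs.length (x⁻¹ * w0) := by
    rw [cs.length_rightInvSeq, List.length_append, hlα, hlβ]
  rw [← hlen2, hcard]
  apply list_len_eq_card
  · intro u hu
    exact cs.isReflection_of_mem_rightInvSeq _ hu
  · intro t ht
    have hodd := odd_count_ris cs (α ++ β) ⟨t, ht⟩ (by rw [hαβ]; exact hinv t ht)
    have hinj : Function.Injective
        (fun u : W => (cs.wordProd β)⁻¹ * u * cs.wordProd β) := by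
      intro a b hab
      simp only [] at hab
      have := mul_right_cancel hab
      exact mul_left_cancel this
    have h2 : List.count t (cs.rightInvSeq (α ++ β))
        = List.count t ((cs.rightInvSeq α).map
            (fun u => (cs.wordProd β)⁻¹ * u * cs.wordProd β))
          + List.count t (cs.rightInvSeq β) := by
      rw [ris_append, List.count_append]
    have hle1 : List.count t ((cs.rightInvSeq α).map
        (fun u => (cs.wordProd β)⁻¹ * u * cs.wordProd β)) ≤ 1 := by
      apply List.nodup_iff_count_le_one.mp
      exact (hredα.nodup_rightInvSeq).map hinj
    have hle2 : List.count t (cs.rightInvSeq β) ≤ 1 :=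
      List.nodup_iff_count_le_one.mp (hredβ.nodup_rightInvSeq) t
    rcases hodd with ⟨k, hk⟩
    have hk' : List.count t (cs.rightInvSeq (α ++ β)) = 2 * k + 1 := hk
    omega

end Finite

section FiniteCor

variable [Fintype W] (w0 : W)

lemma w0_mul_self (hw0 : ∀ u : W, cs.length u ≤ cs.length w0) : w0 * w0 = 1 := by
  have h := length_compl cs w0 hw0 w0⁻¹
  rw [inv_inv, cs.length_inv] at h
  rw [← cs.length_eq_zero_iff]
  omega

lemma length_compl_right (hw0 : ∀ u : W, cs.length u ≤ cs.length w0) (x : W) :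
    cs.length x + cs.length (x * w0) = cs.length w0 := by
  have h := length_compl cs w0 hw0 x⁻¹
  rw [inv_inv, cs.length_inv] at h
  exact h

end FiniteCor

end CoxStmt17

namespace CoxStmt17

section BarR

open LaurentPolynomial

/-- The bar involution on Laurent polynomials, `T n ↦ T (-n)`. -/
noncomputable def barR : LaurentPolynomial ℤ →+* LaurentPolynomial ℤ :=
  (AddMonoidAlgebra.domCongr ℤ ℤ (AddEquiv.neg ℤ)).toRingEquiv.toRingHom

lemma barR_T (n : ℤ) : barR (T n) = T (-n) := by
  show (AddMonoidAlgebra.domCongr ℤ ℤ (AddEquiv.neg ℤ)) (AddMonoidAlgebra.single n 1) = _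
  rw [AddMonoidAlgebra.domCongr_single]
  rfl

lemma barR_C (a : ℤ) : barR (C a) = C a := by
  show (AddMonoidAlgebra.domCongr ℤ ℤ (AddEquiv.neg ℤ)) (AddMonoidAlgebra.single 0 a) = _
  rw [AddMonoidAlgebra.domCongr_single]
  show AddMonoidAlgebra.single (-0 : ℤ) a = _
  rw [neg_zero]
  rfl

lemma barR_C_mul_T (a : ℤ) (n : ℤ) : barR (C a * T n) = C a * T (-n) := by
  rw [map_mul, barR_C, barR_T]

lemma barR_barR (p : LaurentPolynomial ℤ) : barR (barR p) = p := by
  induction p using LaurentPolynomial.induction_on' with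
  | add p q hp hq => rw [map_add, map_add, hp, hq]
  | C_mul_T n a => rw [barR_C_mul_T, barR_C_mul_T, neg_neg]

end BarR

section Algebra

open LaurentPolynomial HeckeAlg

variable {B W : Type*} [Group W] {M : CoxeterMatrix B} {cs : CoxeterSystem M W}
variable {A : Type*} [Ring A] [Algebra (LaurentPolynomial ℤ) A]

local notation "R" => LaurentPolynomial ℤ
local notation "φ" => algebraMap (LaurentPolynomial ℤ) A

/-- `T n` as a unit of `ℤ[v,v⁻¹]`. -/
noncomputable def uT (n : ℤ) : (LaurentPolynomial ℤ)ˣ :=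
  ⟨T n, T (-n), by rw [← T_add, add_neg_cancel, T_zero], by rw [← T_add, neg_add_cancel, T_zero]⟩

variable (ha : HeckeAlg cs A)

/-- The `H` basis. -/
noncomputable def Hb : Module.Basis W (LaurentPolynomial ℤ) A :=
  ha.Tb.unitsSMul (fun x => uT (cs.length x))

lemma Hb_eq (x : W) : Hb ha x = ha.H x := by
  unfold Hb
  rw [Module.Basis.unitsSMul_apply]
  show (T (cs.length x : ℤ) : LaurentPolynomial ℤ) • ha.Tb x = _
  rw [Algebra.smul_def]
  rfl

lemma phi_T_mul_phi_T (m n : ℤ) : φ (T m) * φ (T n) = φ (T (m + n)) := by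
  rw [← map_mul, ← T_add]

lemma H_one : ha.H 1 = 1 := by
  unfold HeckeAlg.H
  rw [cs.length_one, ha.Tb_one, mul_one, Nat.cast_zero, T_zero, map_one]

lemma H_mul {x y : W} (h : cs.length (x * y) = cs.length x + cs.length y) :
    ha.H x * ha.H y = ha.H (x * y) := by
  unfold HeckeAlg.H
  rw [mul_assoc, ← mul_assoc (ha.Tb x), ← Algebra.commutes, mul_assoc, ← mul_assoc,
    phi_T_mul_phi_T, ha.Tb_mul x y h, h]
  norm_num

/-- the scalar `v⁻¹ - v` -/
noncomputable def cc : LaurentPolynomial ℤ := T (-1) - T 1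

lemma Tb_sq (i : B) : ha.Tb (cs.simple i) * ha.Tb (cs.simple i) =
    φ (T (-2)) + (φ (T (-2)) - 1) * ha.Tb (cs.simple i) := by
  have h := ha.Tb_quadratic i
  have hc : ha.Tb (cs.simple i) * φ (T (-2)) = φ (T (-2)) * ha.Tb (cs.simple i) :=
    (Algebra.commutes _ _).symm
  calc ha.Tb (cs.simple i) * ha.Tb (cs.simple i)
      = (ha.Tb (cs.simple i) + 1) * (ha.Tb (cs.simple i) - φ (T (-2)))
        + (ha.Tb (cs.simple i) * φ (T (-2)) - ha.Tb (cs.simple i)) + φ (T (-2)) := by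
        noncomm_ring
    _ = (ha.Tb (cs.simple i) * φ (T (-2)) - ha.Tb (cs.simple i)) + φ (T (-2)) := by
        rw [h, zero_add]
    _ = (φ (T (-2)) * ha.Tb (cs.simple i) - ha.Tb (cs.simple i)) + φ (T (-2)) := by
        rw [hc]
    _ = φ (T (-2)) + (φ (T (-2)) - 1) * ha.Tb (cs.simple i) := by noncomm_ring

lemma H_simple_sq (i : B) : ha.H (cs.simple i) * ha.H (cs.simple i)
    = 1 + φ cc * ha.H (cs.simple i) := by
  have ht := Tb_sq ha i
  have hq1 : φ (T (1 + 1 : ℤ)) * φ (T (-2:ℤ)) = (1:A) := by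
    rw [phi_T_mul_phi_T]
    norm_num [T_zero]
  have hcc : cc * T 1 = 1 - T (1 + 1 : ℤ) := by
    unfold cc
    rw [sub_mul, ← T_add, ← T_add]
    norm_num [T_zero]
  unfold HeckeAlg.H
  rw [cs.length_simple, Nat.cast_one]
  rw [mul_assoc, ← mul_assoc (ha.Tb (cs.simple i)), ← Algebra.commutes, mul_assoc, ← mul_assoc,
    phi_T_mul_phi_T, ht, mul_add, hq1]
  congr 1
  rw [← mul_assoc, ← mul_assoc, ← map_mul, hcc, map_sub, map_one, mul_sub, hq1, mul_one]

lemma Hs_mul_H_desc (i : B) (y : W) (h : cs.length (cs.simple i * y) + 1 = cs.length y) :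
    ha.H (cs.simple i) * ha.H y = ha.H (cs.simple i * y) + φ cc * ha.H y := by
  have hc : cs.length (cs.simple i * (cs.simple i * y))
      = cs.length (cs.simple i) + cs.length (cs.simple i * y) := by
    rw [cs.simple_mul_simple_cancel_left, cs.length_simple]
    omega
  have hy := H_mul ha hc
  rw [cs.simple_mul_simple_cancel_left] at hy
  calc ha.H (cs.simple i) * ha.H y
      = ha.H (cs.simple i) * (ha.H (cs.simple i) * ha.H (cs.simple i * y)) := by rw [hy]
    _ = (ha.H (cs.simple i) * ha.H (cs.simple i)) * ha.H (cs.simple i * y) := by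
        rw [mul_assoc]
    _ = (1 + φ cc * ha.H (cs.simple i)) * ha.H (cs.simple i * y) := by rw [H_simple_sq]
    _ = ha.H (cs.simple i * y) + φ cc * (ha.H (cs.simple i) * ha.H (cs.simple i * y)) := by
        noncomm_ring
    _ = ha.H (cs.simple i * y) + φ cc * ha.H y := by rw [hy]

lemma H_mul_Hs_desc (i : B) (y : W) (h : cs.length (y * cs.simple i) + 1 = cs.length y) :
    ha.H y * ha.H (cs.simple i) = ha.H (y * cs.simple i) + φ cc * ha.H y := by
  have hc : cs.length ((y * cs.simple i) * cs.simple i)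
      = cs.length (y * cs.simple i) + cs.length (cs.simple i) := by
    rw [cs.simple_mul_simple_cancel_right, cs.length_simple]
    omega
  have hy := H_mul ha hc
  rw [cs.simple_mul_simple_cancel_right] at hy
  calc ha.H y * ha.H (cs.simple i)
      = (ha.H (y * cs.simple i) * ha.H (cs.simple i)) * ha.H (cs.simple i) := by rw [hy]
    _ = ha.H (y * cs.simple i) * (ha.H (cs.simple i) * ha.H (cs.simple i)) := by
        rw [mul_assoc]
    _ = ha.H (y * cs.simple i) * (1 + φ cc * ha.H (cs.simple i)) := by rw [H_simple_sq]
    _ = ha.H (y * cs.simple i) + (ha.H (y * cs.simple i) * φ cc) * ha.H (cs.simple i) := by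
        noncomm_ring
    _ = ha.H (y * cs.simple i) + (φ cc * ha.H (y * cs.simple i)) * ha.H (cs.simple i) := by
        rw [← Algebra.commutes cc (ha.H (y * cs.simple i))]
    _ = ha.H (y * cs.simple i) + φ cc * ha.H y := by rw [mul_assoc, hy]

/-- The coefficient of `H_1`. -/
noncomputable def tau : A →ₗ[LaurentPolynomial ℤ] LaurentPolynomial ℤ := (Hb ha).coord 1

lemma tau_H (y : W) : tau ha (ha.H y) = if y = 1 then 1 else 0 := by
  unfold tau
  rw [← Hb_eq, Module.Basis.coord_apply, Module.Basis.repr_self]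
  exact Finsupp.single_apply

lemma tau_phi_mul (r : LaurentPolynomial ℤ) (z : A) :
    tau ha (φ r * z) = r * tau ha z := by
  rw [← Algebra.smul_def, map_smul, smul_eq_mul]

lemma tau_H_H (x y : W) : tau ha (ha.H x * ha.H y) = if x * y = 1 then 1 else 0 := by
  suffices h : ∀ n x y, cs.length x = n →
      tau ha (ha.H x * ha.H y) = if x * y = 1 then 1 else 0 by
    exact h _ x y rfl
  intro n
  induction n using Nat.strong_induction_on with
  | _ n ih =>
    intro x y hx
    by_cases hx1 : x = 1
    · subst hx1
      rw [H_one, one_mul, tau_H, one_mul]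
    · obtain ⟨i, hi⟩ := cs.exists_rightDescent_of_ne_one hx1
      unfold CoxeterSystem.IsRightDescent at hi
      have hlen : cs.length (x * cs.simple i) + 1 = cs.length x := by
        rcases cs.length_mul_simple x i with h|h <;> omega
      set x' := x * cs.simple i with hx'
      have hxe : x = x' * cs.simple i := by
        rw [hx', cs.simple_mul_simple_cancel_right]
      have hHx : ha.H x' * ha.H (cs.simple i) = ha.H x := by
        have hc : cs.length (x' * cs.simple i)
            = cs.length x' + cs.length (cs.simple i) := by
          rw [← hxe, cs.length_simple]
          omega
        rw [H_mul ha hc, ← hxe]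
      rcases cs.length_simple_mul y i with hy|hy
      · have hc2 : cs.length (cs.simple i * y)
            = cs.length (cs.simple i) + cs.length y := by
          rw [cs.length_simple]; omega
        rw [← hHx, mul_assoc, H_mul ha hc2]
        rw [ih (cs.length x') (by omega) x' _ rfl]
        have he : x' * (cs.simple i * y) = x * y := by rw [← mul_assoc, ← hxe]
        rw [he]
      · have hypos : 1 ≤ cs.length y := by
          by_contra h0
          have hy1 : y = 1 := by
            rw [← cs.length_eq_zero_iff]
            omega
          subst hy1
          rw [mul_one, cs.length_simple, cs.length_one] at hy
          omega
        have hdesc : cs.length (cs.simple i * y) + 1 = cs.length y := by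
          have hne := cs.length_simple_mul_ne y i
          omega
        rw [← hHx, mul_assoc, Hs_mul_H_desc ha i y hdesc, mul_add, map_add]
        have hcomm : ha.H x' * (φ cc * ha.H y) = φ cc * (ha.H x' * ha.H y) := by
          rw [← mul_assoc, ← Algebra.commutes cc (ha.H x'), mul_assoc]
        rw [hcomm, tau_phi_mul, ih (cs.length x') (by omega) x' (cs.simple i * y) rfl,
          ih (cs.length x') (by omega) x' y rfl]
        have he1 : x' * (cs.simple i * y) = x * y := by rw [← mul_assoc, ← hxe]
        have he2 : x' * y ≠ 1 := by
          intro hcon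
          have hxy : x * (cs.simple i * y) = 1 := by
            rw [← mul_assoc, ← hx']
            exact hcon
          have h1 : cs.simple i * y = x⁻¹ := eq_inv_of_mul_eq_one_right hxy
          have h2 : cs.length (cs.simple i * y) = cs.length x := by
            rw [h1, cs.length_inv]
          have hyx : x'⁻¹ = y := inv_eq_of_mul_eq_one_right hcon
          have h3 : cs.length y = cs.length x' := by
            rw [← hyx, cs.length_inv]
          omega
        rw [he1, if_neg he2, mul_zero, add_zero]

/-- The antiautomorphism `H_x ↦ H_{x⁻¹}`. -/
noncomputable def om : A →ₗ[LaurentPolynomial ℤ] A :=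
  (Hb ha).constr (LaurentPolynomial ℤ) (fun x => ha.H x⁻¹)

lemma om_H (x : W) : om ha (ha.H x) = ha.H x⁻¹ := by
  unfold om
  rw [← Hb_eq ha x, Module.Basis.constr_basis]

lemma om_one : om ha (1 : A) = 1 := by
  rw [← H_one ha, om_H, inv_one]

lemma om_phi (r : LaurentPolynomial ℤ) (m : A) : om ha (φ r * m) = φ r * om ha m := by
  rw [← Algebra.smul_def, map_smul, Algebra.smul_def]

lemma len_inv_simple (i : B) (z : W) :
    cs.length (z⁻¹ * cs.simple i) = cs.length (cs.simple i * z) := by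
  have : z⁻¹ * cs.simple i = (cs.simple i * z)⁻¹ := by
    rw [mul_inv_rev, cs.inv_simple]
  rw [this, cs.length_inv]

lemma om_s_mul (i : B) (a : A) :
    om ha (ha.H (cs.simple i) * a) = om ha a * ha.H (cs.simple i) := by
  have hext : (om ha) ∘ₗ (LinearMap.mulLeft (LaurentPolynomial ℤ) (ha.H (cs.simple i)))
      = (LinearMap.mulRight (LaurentPolynomial ℤ) (ha.H (cs.simple i))) ∘ₗ (om ha) := by
    apply Module.Basis.ext (Hb ha)
    intro z
    simp only [LinearMap.comp_apply, LinearMap.mulLeft_apply, LinearMap.mulRight_apply]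
    rw [Hb_eq]
    rcases cs.length_simple_mul z i with hz|hz
    · have hc : cs.length (cs.simple i * z) = cs.length (cs.simple i) + cs.length z := by
        rw [cs.length_simple]; omega
      rw [H_mul ha hc, om_H, om_H, mul_inv_rev, cs.inv_simple]
      have hc2 : cs.length (z⁻¹ * cs.simple i)
          = cs.length z⁻¹ + cs.length (cs.simple i) := by
        rw [len_inv_simple, cs.length_inv, cs.length_simple]
        omega
      rw [← H_mul ha hc2]
    · have hzpos : 1 ≤ cs.length z := by
        by_contra h0
        have hz1 : z = 1 := by rw [← cs.length_eq_zero_iff]; omega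
        subst hz1
        rw [mul_one, cs.length_simple, cs.length_one] at hz
        omega
      have hdesc : cs.length (cs.simple i * z) + 1 = cs.length z := by
        have hne := cs.length_simple_mul_ne z i
        omega
      rw [Hs_mul_H_desc ha i z hdesc, map_add, om_phi, om_H, om_H]
      have hdesc2 : cs.length (z⁻¹ * cs.simple i) + 1 = cs.length z⁻¹ := by
        rw [len_inv_simple, cs.length_inv]
        omega
      rw [H_mul_Hs_desc ha i z⁻¹ hdesc2, mul_inv_rev, cs.inv_simple]
  have := LinearMap.congr_fun hext a
  simpa using this

lemma om_H_mul (x : W) (b : A) : om ha (ha.H x * b) = om ha b * ha.H x⁻¹ := by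
  suffices h : ∀ n x, cs.length x = n → ∀ b : A,
      om ha (ha.H x * b) = om ha b * ha.H x⁻¹ by
    exact h _ x rfl b
  intro n
  induction n using Nat.strong_induction_on with
  | _ n ih =>
    intro x hx b
    by_cases hx1 : x = 1
    · subst hx1
      rw [H_one, one_mul, inv_one, H_one, mul_one]
    · obtain ⟨i, hi⟩ := cs.exists_leftDescent_of_ne_one hx1
      unfold CoxeterSystem.IsLeftDescent at hi
      have hlen0 : cs.length (cs.simple i * x) + 1 = cs.length x := by
        rcases cs.length_simple_mul x i with h|h <;> omega
      set x'' := cs.simple i * x with hx''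
      have hxe : x = cs.simple i * x'' := by
        rw [hx'', cs.simple_mul_simple_cancel_left]
      have hlen : cs.length x'' + 1 = cs.length x := hlen0
      have hHx : ha.H (cs.simple i) * ha.H x'' = ha.H x := by
        have hc : cs.length (cs.simple i * x'')
            = cs.length (cs.simple i) + cs.length x'' := by
          rw [← hxe, cs.length_simple]; omega
        rw [H_mul ha hc, ← hxe]
      rw [← hHx, mul_assoc, om_s_mul, ih (cs.length x'') (by omega) x'' rfl b]
      have hc3 : cs.length (x''⁻¹ * cs.simple i)
          = cs.length x''⁻¹ + cs.length (cs.simple i) := by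
        rw [len_inv_simple, cs.length_inv, cs.length_simple, ← hxe]
        omega
      rw [mul_assoc, H_mul ha hc3]
      have : x''⁻¹ * cs.simple i = x⁻¹ := by
        rw [← cs.inv_simple i, ← mul_inv_rev, ← hxe]
      rw [this]

lemma om_mul_rev (a b : A) : om ha (a * b) = om ha b * om ha a := by
  have hext : (om ha) ∘ₗ (LinearMap.mulRight (LaurentPolynomial ℤ) b)
      = (LinearMap.mulLeft (LaurentPolynomial ℤ) (om ha b)) ∘ₗ (om ha) := by
    apply Module.Basis.ext (Hb ha)
    intro x
    simp only [LinearMap.comp_apply, LinearMap.mulLeft_apply, LinearMap.mulRight_apply]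
    rw [Hb_eq, om_H_mul, om_H]
  have := LinearMap.congr_fun hext a
  simpa using this

lemma tau_comm (a b : A) : tau ha (a * b) = tau ha (b * a) := by
  have hext : (LinearMap.mul (LaurentPolynomial ℤ) A).compr₂ (tau ha)
      = ((LinearMap.mul (LaurentPolynomial ℤ) A).flip).compr₂ (tau ha) := by
    apply Module.Basis.ext (Hb ha)
    intro x
    apply Module.Basis.ext (Hb ha)
    intro y
    simp only [LinearMap.compr₂_apply, LinearMap.mul_apply', LinearMap.flip_apply]
    rw [Hb_eq, Hb_eq, tau_H_H, tau_H_H]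
    have hiff : x * y = 1 ↔ y * x = 1 := by
      constructor <;> intro h
      · rw [eq_inv_of_mul_eq_one_right h, inv_mul_cancel]
      · rw [eq_inv_of_mul_eq_one_right h, inv_mul_cancel]
    simp only [hiff]
  have h1 := LinearMap.congr_fun hext a
  have h2 := LinearMap.congr_fun h1 b
  simpa using h2

section WithForm

variable (Bf : A →ₗ[LaurentPolynomial ℤ] A →ₗ[LaurentPolynomial ℤ] LaurentPolynomial ℤ)

lemma Bf_eq_tau (hBf : ∀ x y : W, Bf (ha.H x) (ha.H y) = if x = y then 1 else 0)
    (a b : A) : Bf a b = tau ha (om ha a * b) := by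
  have hext : Bf = ((LinearMap.mul (LaurentPolynomial ℤ) A).comp (om ha)).compr₂ (tau ha) := by
    apply Module.Basis.ext (Hb ha)
    intro x
    apply Module.Basis.ext (Hb ha)
    intro y
    simp only [LinearMap.compr₂_apply, LinearMap.mul_apply', LinearMap.comp_apply]
    rw [Hb_eq, Hb_eq, hBf, om_H, tau_H_H]
    simp only [inv_mul_eq_one]
  rw [hext]
  simp

lemma Bf_coord (hBf : ∀ x y : W, Bf (ha.H x) (ha.H y) = if x = y then 1 else 0)
    (a : A) (y : W) : Bf a (ha.H y) = (Hb ha).repr a y := by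
  have hext : Bf.flip (ha.H y) = (Hb ha).coord y := by
    apply Module.Basis.ext (Hb ha)
    intro x
    rw [LinearMap.flip_apply, Module.Basis.coord_apply, Module.Basis.repr_self, Hb_eq, hBf]
    exact (Finsupp.single_apply).symm
  have := LinearMap.congr_fun hext a
  rw [LinearMap.flip_apply] at this
  rw [this, Module.Basis.coord_apply]

end WithForm

section WithBar

variable (bar : ha.Bar)

lemma d_phi (p : LaurentPolynomial ℤ) : bar.d (φ p) = φ (barR p) := by
  induction p using LaurentPolynomial.induction_on' with
  | add p q hp hq => rw [map_add, map_add, hp, hq, map_add, map_add]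
  | C_mul_T n a =>
    have hCa : (LaurentPolynomial.C a : LaurentPolynomial ℤ) = (a : LaurentPolynomial ℤ) :=
      eq_intCast LaurentPolynomial.C a
    rw [barR_C_mul_T]
    simp only [map_mul, hCa, map_intCast, bar.d_scalar]

lemma d_smul (p : LaurentPolynomial ℤ) (a : A) :
    bar.d (p • a) = (barR p) • bar.d a := by
  rw [Algebra.smul_def, map_mul, d_phi, Algebra.smul_def]

lemma dd_H (x : W) : bar.d (bar.d (ha.H x)) = ha.H x := by
  have h1 := congrArg bar.d (bar.d_H_mul x)
  rw [map_mul, map_one] at h1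
  have h3 := bar.d_H_mul x⁻¹
  rw [inv_inv] at h3
  exact left_inv_eq_right_inv h1 h3

/-- `d ∘ d` as a linear map. -/
noncomputable def ddL : A →ₗ[LaurentPolynomial ℤ] A where
  toFun := fun a => bar.d (bar.d a)
  map_add' := by intros; simp [map_add]
  map_smul' := by
    intro r a
    simp only [RingHom.id_apply]
    rw [d_smul, d_smul, barR_barR]

lemma dd_eq (a : A) : bar.d (bar.d a) = a := by
  have h : ddL ha bar = LinearMap.id := by
    apply Module.Basis.ext (Hb ha)
    intro x
    show bar.d (bar.d ((Hb ha) x)) = (Hb ha) x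
    rw [Hb_eq, dd_H]
  have := LinearMap.congr_fun h a
  exact this

/-- extension lemma for `bar`-semilinear additive maps -/
lemma sl_ext {N : Type*} [AddCommMonoid N] [Module (LaurentPolynomial ℤ) N]
    (F G : A →+ N)
    (hF : ∀ p a, F (φ p * a) = barR p • F a)
    (hG : ∀ p a, G (φ p * a) = barR p • G a)
    (h : ∀ x : W, F (ha.H x) = G (ha.H x)) (a : A) : F a = G a := by
  have hr := (Hb ha).linearCombination_repr a
  rw [Finsupp.linearCombination_apply] at hr
  rw [← hr, map_finsuppSum, map_finsuppSum]
  apply Finsupp.sum_congr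
  intro x _
  rw [Algebra.smul_def, Hb_eq, hF, hG, h x]

lemma om_d_comm (a : A) : om ha (bar.d a) = bar.d (om ha a) := by
  have key : ∀ x : W, om ha (bar.d (ha.H x)) = bar.d (om ha (ha.H x)) := by
    intro x
    have ha1 : om ha (bar.d (ha.H x)) * ha.H x = 1 := by
      have h0 : om ha (ha.H x⁻¹ * bar.d (ha.H x)) = 1 := by
        rw [bar.d_H_mul' x, om_one]
      rw [om_mul_rev, om_H, inv_inv] at h0
      exact h0
    have h4 := bar.d_H_mul' x⁻¹
    rw [inv_inv] at h4
    rw [om_H]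
    exact left_inv_eq_right_inv ha1 h4
  refine sl_ext ha (AddMonoidHom.mk' (fun a => om ha (bar.d a)) (by intros; simp [map_add]))
    (AddMonoidHom.mk' (fun a => bar.d (om ha a)) (by intros; simp [map_add])) ?_ ?_ key a
  · intro p a
    show om ha (bar.d (φ p * a)) = barR p • om ha (bar.d a)
    rw [← Algebra.smul_def, d_smul, map_smul]
  · intro p a
    show bar.d (om ha (φ p * a)) = barR p • bar.d (om ha a)
    rw [← Algebra.smul_def, map_smul, d_smul]

end WithBar

section Longest

variable [Fintype W] (bar : ha.Bar) (w0 : W)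

lemma dH_mul_Hw0 (hw0 : ∀ u : W, cs.length u ≤ cs.length w0) (w : W) :
    bar.d (ha.H w) * ha.H w0 = ha.H (w * w0) := by
  have hfac : ha.H w⁻¹ * ha.H (w * w0) = ha.H w0 := by
    have hl : cs.length (w⁻¹ * (w * w0)) = cs.length w⁻¹ + cs.length (w * w0) := by
      rw [inv_mul_cancel_left, cs.length_inv]
      have := length_compl_right cs w0 hw0 w
      omega
    rw [H_mul ha hl, inv_mul_cancel_left]
  calc bar.d (ha.H w) * ha.H w0
      = bar.d (ha.H w) * (ha.H w⁻¹ * ha.H (w * w0)) := by rw [hfac]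
    _ = (bar.d (ha.H w) * ha.H w⁻¹) * ha.H (w * w0) := by rw [mul_assoc]
    _ = ha.H (w * w0) := by rw [bar.d_H_mul w, one_mul]

lemma keyclaim' (hw0 : ∀ u : W, cs.length u ≤ cs.length w0) (b : A) :
    tau ha (bar.d b * (ha.H w0 * ha.H w0)) = barR (tau ha b) := by
  have key : ∀ w : W, tau ha (bar.d (ha.H w) * (ha.H w0 * ha.H w0))
      = barR (tau ha (ha.H w)) := by
    intro w
    rw [← mul_assoc, dH_mul_Hw0 ha bar w0 hw0, tau_H_H, tau_H]
    have hcond : (w * w0) * w0 = 1 ↔ w = 1 := by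
      rw [mul_assoc, w0_mul_self cs w0 hw0, mul_one]
    by_cases hw : w = 1
    · rw [if_pos (hcond.mpr hw), if_pos hw, map_one]
    · rw [if_neg (fun hc => hw (hcond.mp hc)), if_neg hw, map_zero]
  refine sl_ext ha
    (AddMonoidHom.mk' (fun b => tau ha (bar.d b * (ha.H w0 * ha.H w0)))
      (by intros; simp [map_add, add_mul]))
    (AddMonoidHom.mk' (fun b => barR (tau ha b)) (by intros; simp [map_add])) ?_ ?_ key b
  · intro p a
    show tau ha (bar.d (φ p * a) * (ha.H w0 * ha.H w0))
      = barR p • tau ha (bar.d a * (ha.H w0 * ha.H w0))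
    rw [← Algebra.smul_def, d_smul, Algebra.smul_def, mul_assoc, tau_phi_mul, smul_eq_mul]
  · intro p a
    show barR (tau ha (φ p * a)) = barR p • barR (tau ha a)
    rw [tau_phi_mul, map_mul, smul_eq_mul]

lemma keyclaim (hw0 : ∀ u : W, cs.length u ≤ cs.length w0) (h : A) :
    tau ha (bar.d h) = barR (tau ha (h * (ha.H w0 * ha.H w0))) := by
  have h1 := keyclaim' ha bar w0 hw0 (bar.d h)
  rw [dd_eq] at h1
  have h2 := congrArg barR h1
  rw [barR_barR] at h2
  rw [← h2]

lemma form_d_d (hw0 : ∀ u : W, cs.length u ≤ cs.length w0) (Bf : A →ₗ[LaurentPolynomial ℤ] A →ₗ[LaurentPolynomial ℤ] LaurentPolynomial ℤ)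
    (hBf : ∀ x y : W, Bf (ha.H x) (ha.H y) = if x = y then 1 else 0) (a b : A) :
    Bf (bar.d a) (bar.d b) = barR (Bf a (b * (ha.H w0 * ha.H w0))) := by
  rw [Bf_eq_tau ha Bf hBf, Bf_eq_tau ha Bf hBf]
  rw [om_d_comm, ← map_mul, keyclaim ha bar w0 hw0, mul_assoc]

end Longest

section Inject

lemma toLaurent_coeff_neg (q : Polynomial ℤ) (m : ℤ) (hm : m < 0) :
    (Polynomial.toLaurent q).coeff m = 0 := by
  induction q using Polynomial.induction_on' with
  | add p q hp hq =>
    rw [map_add]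
    show (Polynomial.toLaurent p + Polynomial.toLaurent q).coeff m = 0
    rw [AddMonoidAlgebra.coeff_add, Finsupp.add_apply, hp, hq, add_zero]
  | monomial n a =>
    rw [Polynomial.toLaurent_C_mul_T, ← LaurentPolynomial.single_eq_C_mul_T]
    rw [AddMonoidAlgebra.coeff_single, Finsupp.single_apply]
    rw [if_neg (by omega : ¬ (n : ℤ) = m)]

lemma vpol_mul_coeff (r g : LaurentPolynomial ℤ) (hr : IsVPol r) (ν : ℤ)
    (hg : ∀ m : ℤ, m < ν → g.coeff m = 0) : (r * g).coeff ν = 0 := by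
  obtain ⟨q, rfl⟩ := hr
  by_contra h0
  have hmem : ν ∈ (Polynomial.toLaurent q * T 1 * g).coeff.support :=
    Finsupp.mem_support_iff.mpr h0
  have hsub := AddMonoidAlgebra.support_coeff_mul_subset (Polynomial.toLaurent q * T 1) g
  obtain ⟨s, hs, t, ht, hst⟩ := Finset.mem_add.mp (hsub hmem)
  have hsub2 := AddMonoidAlgebra.support_coeff_mul_subset (Polynomial.toLaurent q) (T 1)
  obtain ⟨s1, hs1, s2, hs2, hs12⟩ := Finset.mem_add.mp (hsub2 hs)
  have hs1' : 0 ≤ s1 := by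
    by_contra hneg
    exact (Finsupp.mem_support_iff.mp hs1) (toLaurent_coeff_neg q s1 (by omega))
  have hs2' : s2 = 1 := by
    have : (T 1 : LaurentPolynomial ℤ).coeff = Finsupp.single (1 : ℤ) (1 : ℤ) := rfl
    rw [this, Finsupp.support_single_ne_zero _ (one_ne_zero)] at hs2
    exact Finset.mem_singleton.mp hs2
  have ht' : ν ≤ t := by
    by_contra hlt
    exact (Finsupp.mem_support_iff.mp ht) (hg t (by omega))
  omega

lemma pairing_inj [Fintype W]
    (Bf : A →ₗ[LaurentPolynomial ℤ] A →ₗ[LaurentPolynomial ℤ] LaurentPolynomial ℤ)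
    (hBf : ∀ x y : W, Bf (ha.H x) (ha.H y) = if x = y then 1 else 0)
    (Cf : W → A)
    (hCexp : ∀ z, ∃ f : W →₀ LaurentPolynomial ℤ, (∀ y, IsVPol (f y)) ∧
      Cf z = ha.H z + f.sum fun y r => r • ha.H y)
    (a : A) (ha0 : ∀ y, Bf a (Cf y) = 0) : a = 0 := by
  classical
  choose f hfv hfe using hCexp
  set g : W → LaurentPolynomial ℤ := fun z => (Hb ha).repr a z with hgdef
  have heq : ∀ y, g y + (f y).sum (fun z r => r * g z) = 0 := by
    intro y
    have h0 := ha0 y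
    rw [hfe y, map_add, Bf_coord ha Bf hBf] at h0
    have hsum : (Bf a) ((f y).sum fun z r => r • ha.H z)
        = (f y).sum fun z r => r * g z := by
      rw [map_finsuppSum]
      apply Finsupp.sum_congr
      intro z _
      rw [map_smul, smul_eq_mul, Bf_coord ha Bf hBf]
    rw [hsum] at h0
    exact h0
  by_contra hne
  have hgne : ∃ z, g z ≠ 0 := by
    by_contra hall
    push_neg at hall
    apply hne
    have hzero : (Hb ha).repr a = 0 := Finsupp.ext fun z => hall z
    exact ((Hb ha).repr.map_eq_zero_iff).mp hzero
  set S : Finset ℤ := Finset.univ.biUnion (fun z : W => (g z).coeff.support) with hSdef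
  have hS : S.Nonempty := by
    obtain ⟨z, hz⟩ := hgne
    obtain ⟨m, hm⟩ := Finsupp.support_nonempty_iff.mpr
      (show (g z).coeff ≠ 0 by
        rwa [Ne, ← AddMonoidAlgebra.ofCoeff_eq_zero, AddMonoidAlgebra.ofCoeff_coeff])
    exact ⟨m, Finset.mem_biUnion.mpr ⟨z, Finset.mem_univ z, hm⟩⟩
  set ν := S.min' hS with hνdef
  have hν_le : ∀ (z : W) (m : ℤ), m < ν → (g z).coeff m = 0 := by
    intro z m hm
    by_contra h0
    have hmem : m ∈ S := Finset.mem_biUnion.mpr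
      ⟨z, Finset.mem_univ z, Finsupp.mem_support_iff.mpr h0⟩
    have := S.min'_le m hmem
    omega
  obtain ⟨y0, _, hy0⟩ := Finset.mem_biUnion.mp (S.min'_mem hS)
  have hcoef := congrArg (fun p : LaurentPolynomial ℤ => p.coeff ν) (heq y0)
  rw [AddMonoidAlgebra.coeff_add, Finsupp.add_apply] at hcoef
  have hsum0 : ((f y0).sum fun z r => r * g z).coeff ν = 0 := by
    rw [Finsupp.sum, AddMonoidAlgebra.coeff_sum, Finsupp.finset_sum_apply]
    apply Finset.sum_eq_zero
    intro z _
    exact vpol_mul_coeff (f y0 z) (g z) (hfv y0 z) ν (hν_le z)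
  rw [hsum0, add_zero] at hcoef
  have : (0 : LaurentPolynomial ℤ).coeff ν = 0 := rfl
  exact (Finsupp.mem_support_iff.mp hy0) (hcoef.trans this)

end Inject

end Algebra

end CoxStmt17

/-- for finite `W` with longest element `w₀`, `P_x H_{w₀}⁻¹` is self-dual:
`P_x = C^x H_{w₀}` for some bar-invariant `C^x`. -/
theorem stmt17 {B W : Type*} [Group W] [Fintype W] {M : CoxeterMatrix B}
    (cs : CoxeterSystem M W)
    (A : Type*) [Ring A] [Algebra (LaurentPolynomial ℤ) A] (ha : HeckeAlg cs A)
    (bar : ha.Bar) (w0 : W) (hw0 : ∀ x : W, cs.length x ≤ cs.length w0)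
    (Bf : A →ₗ[LaurentPolynomial ℤ] A →ₗ[LaurentPolynomial ℤ] LaurentPolynomial ℤ)
    (hBf : ∀ x y : W, Bf (ha.H x) (ha.H y) = if x = y then 1 else 0)
    (C : W → A) (hC : ∀ z, ha.IsKL bar z (C z))
    (P : W → A) (hP : ∀ x y : W, Bf (P x) (C y) = if x = y then 1 else 0)
    (x : W) :
    ∃ c : A, bar.d c = c ∧ P x = c * ha.H w0 := by
  classical
  have hmulw0 : w0 * w0 = 1 := CoxStmt17.w0_mul_self cs w0 hw0
  have hw0inv : w0⁻¹ = w0 := inv_eq_of_mul_eq_one_right hmulw0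
  have hdu_u : bar.d (ha.H w0) * ha.H w0 = 1 := by
    have h := bar.d_H_mul w0
    rwa [hw0inv] at h
  have hu_du : ha.H w0 * bar.d (ha.H w0) = 1 := by
    have h := bar.d_H_mul' w0
    rwa [hw0inv] at h
  set Q := bar.d (P x) * (ha.H w0 * ha.H w0) with hQ
  have hom_du : CoxStmt17.om ha (bar.d (ha.H w0)) = bar.d (ha.H w0) := by
    rw [CoxStmt17.om_d_comm, CoxStmt17.om_H, hw0inv]
  have hQpair : ∀ y, Bf Q (C y) = Bf (P x) (C y) := by
    intro y
    have hPP : bar.d (P x * bar.d (ha.H w0) * bar.d (ha.H w0)) = Q := by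
      rw [map_mul, map_mul, CoxStmt17.dd_eq ha bar, hQ, mul_assoc]
    have hmid : Bf (P x * bar.d (ha.H w0) * bar.d (ha.H w0)) (C y * (ha.H w0 * ha.H w0))
        = Bf (P x) (C y) := by
      rw [CoxStmt17.Bf_eq_tau ha Bf hBf, CoxStmt17.Bf_eq_tau ha Bf hBf]
      rw [CoxStmt17.om_mul_rev, CoxStmt17.om_mul_rev, hom_du]
      have hassoc : (bar.d (ha.H w0) * (bar.d (ha.H w0) * CoxStmt17.om ha (P x)))
            * (C y * (ha.H w0 * ha.H w0))
          = (bar.d (ha.H w0) * bar.d (ha.H w0))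
            * (CoxStmt17.om ha (P x) * (C y * (ha.H w0 * ha.H w0))) := by
        simp only [mul_assoc]
      rw [hassoc, CoxStmt17.tau_comm]
      have hassoc2 : (CoxStmt17.om ha (P x) * (C y * (ha.H w0 * ha.H w0)))
            * (bar.d (ha.H w0) * bar.d (ha.H w0))
          = CoxStmt17.om ha (P x) * (C y *
              (ha.H w0 * (ha.H w0 * (bar.d (ha.H w0) * bar.d (ha.H w0))))) := by
        simp only [mul_assoc]
      rw [hassoc2, ← mul_assoc (ha.H w0) (bar.d (ha.H w0)), hu_du, one_mul, hu_du, mul_one]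
    calc Bf Q (C y)
        = Bf (bar.d (P x * bar.d (ha.H w0) * bar.d (ha.H w0))) (bar.d (C y)) := by
          rw [hPP, (hC y).1]
      _ = CoxStmt17.barR (Bf (P x * bar.d (ha.H w0) * bar.d (ha.H w0)) (C y * (ha.H w0 * ha.H w0))) :=
          CoxStmt17.form_d_d ha bar w0 hw0 Bf hBf _ _
      _ = CoxStmt17.barR (Bf (P x) (C y)) := by rw [hmid]
      _ = Bf (P x) (C y) := by
          rw [hP x y]
          by_cases hxy : x = y
          · rw [if_pos hxy, map_one]
          · rw [if_neg hxy, map_zero]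
  have hQP : Q = P x := by
    have hdiff : ∀ y, Bf (Q - P x) (C y) = 0 := by
      intro y
      rw [map_sub, LinearMap.sub_apply, hQpair y, sub_self]
    have h0 := CoxStmt17.pairing_inj ha Bf hBf C (fun z => (hC z).2) (Q - P x) hdiff
    exact sub_eq_zero.mp h0
  refine ⟨bar.d (P x) * ha.H w0, ?_, ?_⟩
  · rw [map_mul, CoxStmt17.dd_eq ha bar]
    have h1 : bar.d (P x) * ha.H w0 = Q * bar.d (ha.H w0) := by
      rw [hQ, mul_assoc, mul_assoc, hu_du, mul_one]
    rw [h1, hQP]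
  · rw [mul_assoc, ← hQ]
    exact hQP.symm
end
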